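/- arXiv:1311.0267 — 12 statements merged into one kernel-verified Lean document; each statement's English description precedes it below -/
import Mathlib

section
/- Weighted Cartan–Hadamard theorem along a geodesic (Theorem 4.2, analytic form): Let E be a real inner product space, let a : ℝ → ℝ be differentiable, and let R : ℝ → (E →L[ℝ] E) be a continuous family of self-adjoint operators such that ⟨R(t)v, v⟩ + (a'(t) + a(t)²)·‖v‖² ≤ 0 for every t ∈ ℝ and every v ∈ E. If J : ℝ → E is twice differentiable with J''(t) = −R(t)(J(t)) for all t, and J(0) = 0 and J(t₀) = 0 for some t₀ > 0, then J(t) = 0 for all t ∈ [0, t₀]. -/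
open scoped RealInnerProductSpace

/-- **Weighted Cartan–Hadamard theorem along a geodesic** (analytic form).
If the strongly weighted curvature is nonpositive, i.e.
`⟪R t v, v⟫ + (a' t + (a t)²) ‖v‖² ≤ 0`, then a Jacobi field `J` (solution of
`J'' = -R J`) vanishing at `0` and at `t₀ > 0` vanishes on all of `[0, t₀]`. -/
theorem weighted_cartan_hadamard
    {E : Type*} [NormedAddCommGroup E] [InnerProductSpace ℝ E]
    (a a' : ℝ → ℝ) (ha : ∀ t, HasDerivAt a (a' t) t)
    (R : ℝ → E →L[ℝ] E) (hRcont : Continuous R)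
    (hRsa : ∀ t (v w : E), ⟪R t v, w⟫ = ⟪v, R t w⟫)
    (hcurv : ∀ t (v : E), ⟪R t v, v⟫ + (a' t + (a t) ^ 2) * ‖v‖ ^ 2 ≤ 0)
    (J J' : ℝ → E)
    (hJ : ∀ t, HasDerivAt J (J' t) t)
    (hJ'' : ∀ t, HasDerivAt J' (-(R t (J t))) t)
    (t₀ : ℝ) (ht₀ : 0 < t₀) (hJ0 : J 0 = 0) (hJt₀ : J t₀ = 0) :
    ∀ t ∈ Set.Icc (0 : ℝ) t₀, J t = 0 := by
  -- the auxiliary function h = ⟪J, J'⟫ - a * ‖J‖²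
  set h : ℝ → ℝ := fun t => ⟪J t, J' t⟫ - a t * ⟪J t, J t⟫ with hh
  set h' : ℝ → ℝ := fun t =>
    (⟪J t, -(R t (J t))⟫ + ⟪J' t, J' t⟫) -
      (a' t * ⟪J t, J t⟫ + a t * (⟪J t, J' t⟫ + ⟪J' t, J t⟫)) with hh'
  have hd : ∀ t, HasDerivAt h (h' t) t := fun t =>
    ((hJ t).inner ℝ (hJ'' t)).sub ((ha t).mul ((hJ t).inner ℝ (hJ t)))
  -- the key inequality : ‖J' t - a t • J t‖² ≤ h' t
  have key : ∀ t, ‖J' t - a t • J t‖ ^ 2 ≤ h' t := by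
    intro t
    have hc := hcurv t (J t)
    have e1 : ⟪J t, R t (J t)⟫ = ⟪R t (J t), J t⟫ := real_inner_comm _ _
    have e2 : ⟪J t, J t⟫ = ‖J t‖ ^ 2 := real_inner_self_eq_norm_sq _
    have e3 : ⟪J' t, J' t⟫ = ‖J' t‖ ^ 2 := real_inner_self_eq_norm_sq _
    have e4 : ‖J' t - a t • J t‖ ^ 2 =
        ‖J' t‖ ^ 2 - 2 * ⟪J' t, a t • J t⟫ + ‖a t • J t‖ ^ 2 := by
      rw [← real_inner_self_eq_norm_sq, ← real_inner_self_eq_norm_sq,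
        ← real_inner_self_eq_norm_sq]
      simp [inner_sub_sub_self]
      rw [real_inner_comm (a t • J t) (J' t)]
      rw [norm_sub_sq_real, real_inner_comm (J' t) (a t • J t)]
    have e5 : ⟪J' t, a t • J t⟫ = a t * ⟪J' t, J t⟫ := real_inner_smul_right _ _ _
    have e6 : ‖a t • J t‖ ^ 2 = a t ^ 2 * ‖J t‖ ^ 2 := by
      rw [norm_smul, mul_pow, Real.norm_eq_abs, sq_abs]
    have e7 : ⟪J' t, J t⟫ = ⟪J t, J' t⟫ := real_inner_comm _ _
    simp only [hh', inner_neg_right, e1, e2, e3, e4, e5, e6, e7]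
    nlinarith [hc]
  have hd0 : ∀ t, 0 ≤ h' t := fun t => le_trans (by positivity) (key t)
  -- h is monotone
  have hmono : Monotone h :=
    monotone_of_deriv_nonneg (fun t => (hd t).differentiableAt)
      (fun t => by rw [(hd t).deriv]; exact hd0 t)
  have h0 : h 0 = 0 := by simp [hh, hJ0]
  have ht0 : h t₀ = 0 := by simp [hh, hJt₀]
  -- h vanishes on [0, t₀]
  have hzero : ∀ t ∈ Set.Icc (0 : ℝ) t₀, h t = 0 := fun t ht =>
    le_antisymm (ht0 ▸ hmono ht.2) (h0 ▸ hmono ht.1)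
  -- hence h' vanishes on [0, t₀] (derivative of a function constant on the interval)
  have hd'zero : ∀ t ∈ Set.Icc (0 : ℝ) t₀, h' t = 0 := by
    intro t ht
    have h1 : HasDerivWithinAt h (h' t) (Set.Icc 0 t₀) t := (hd t).hasDerivWithinAt
    have h2 : HasDerivWithinAt h 0 (Set.Icc 0 t₀) t := by
      have : HasDerivWithinAt (fun _ : ℝ => (0 : ℝ)) 0 (Set.Icc 0 t₀) t :=
        (hasDerivAt_const _ _).hasDerivWithinAt
      exact this.congr hzero (hzero t ht)
    exact (uniqueDiffOn_Icc ht₀ t ht).eq_deriv _ h1 h2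
  -- hence J' = a • J on [0, t₀]
  have hODE : ∀ t ∈ Set.Icc (0 : ℝ) t₀, J' t = a t • J t := by
    intro t ht
    have h1 : ‖J' t - a t • J t‖ ^ 2 ≤ 0 := (hd'zero t ht) ▸ key t
    have h2 : ‖J' t - a t • J t‖ = 0 := by nlinarith [norm_nonneg (J' t - a t • J t)]
    have := norm_eq_zero.mp h2
    exact sub_eq_zero.mp this
  -- integrating factor
  have haC : Continuous a := by
    rw [continuous_iff_continuousAt]; exact fun t => (ha t).continuousAt
  set b : ℝ → ℝ := fun t => ∫ s in (0:ℝ)..t, a s with hb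
  have hbd : ∀ t, HasDerivAt b (a t) t := fun t =>
    intervalIntegral.integral_hasDerivAt_right (haC.intervalIntegrable _ _)
      (haC.stronglyMeasurableAtFilter _ _) haC.continuousAt
  set W : ℝ → E := fun t => Real.exp (-b t) • J t with hW
  have hWd : ∀ t, HasDerivAt W
      (Real.exp (-b t) • J' t + (Real.exp (-b t) * -a t) • J t) t := fun t =>
    (((hbd t).neg).exp).smul (hJ t)
  intro t ht
  have hWzero : ∀ x ∈ Set.Icc (0 : ℝ) t₀, W x = W 0 := by
    apply constant_of_has_deriv_right_zero
    · exact fun x _ => ((hWd x).continuousAt).continuousWithinAt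
    · intro x hx
      have hx' : x ∈ Set.Icc (0 : ℝ) t₀ := ⟨hx.1, le_of_lt hx.2⟩
      have : Real.exp (-b x) • J' x + (Real.exp (-b x) * -a x) • J x = 0 := by
        rw [hODE x hx', smul_smul, ← add_smul]
        ring_nf
        simp
      exact this ▸ (hWd x).hasDerivWithinAt
  have hW0 : W 0 = 0 := by simp [hW, hJ0]
  have := hWzero t ht
  rw [hW0] at this
  have h3 : Real.exp (-b t) • J t = 0 := this
  have h4 := smul_eq_zero.mp h3
  rcases h4 with h4 | h4
  · exact absurd h4 (Real.exp_ne_zero _)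
  · exact h4
end

section
/- Monotonicity step in the proof of the weighted Cartan–Hadamard theorem: Let E be a real inner product space, let a : ℝ → ℝ be differentiable, and let R : ℝ → (E →L[ℝ] E) be a continuous family of self-adjoint operators such that ⟨R(t)v, v⟩ + (a'(t) + a(t)²)·‖v‖² ≤ 0 for every t ∈ ℝ and v ∈ E. Let J : ℝ → E be twice differentiable with J''(t) = −R(t)(J(t)) for all t and J(0) = 0, and let F : ℝ → ℝ satisfy F' = a. Then ⟨J'(t) − a(t)·J(t), J(t)⟩ ≥ 0 for all t ≥ 0, and the function t ↦ e^{−2F(t)}·‖J(t)‖² is monotone nondecreasing on [0, ∞). -/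
open scoped RealInnerProductSpace

/-- **Monotonicity step in the weighted Cartan–Hadamard theorem.**
Under the nonpositivity of the strongly weighted curvature, for a Jacobi field
`J` with `J 0 = 0` one has `⟪J' - a J, J⟫ ≥ 0` for `t ≥ 0`, and
`t ↦ e^{-2F t} ‖J t‖²` is monotone nondecreasing on `[0, ∞)`, where `F' = a`. -/
theorem weighted_cartan_hadamard_monotonicity
    {E : Type*} [NormedAddCommGroup E] [InnerProductSpace ℝ E]
    (a a' : ℝ → ℝ) (ha : ∀ t, HasDerivAt a (a' t) t)
    (R : ℝ → E →L[ℝ] E) (hRcont : Continuous R)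
    (hRsa : ∀ t (v w : E), ⟪R t v, w⟫ = ⟪v, R t w⟫)
    (hcurv : ∀ t (v : E), ⟪R t v, v⟫ + (a' t + (a t) ^ 2) * ‖v‖ ^ 2 ≤ 0)
    (J J' : ℝ → E)
    (hJ : ∀ t, HasDerivAt J (J' t) t)
    (hJ'' : ∀ t, HasDerivAt J' (-(R t (J t))) t)
    (hJ0 : J 0 = 0)
    (F : ℝ → ℝ) (hF : ∀ t, HasDerivAt F (a t) t) :
    (∀ t, 0 ≤ t → 0 ≤ ⟪J' t - a t • J t, J t⟫) ∧
      MonotoneOn (fun t => Real.exp (-2 * F t) * ‖J t‖ ^ 2) (Set.Ici (0 : ℝ)) := by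
  set φ : ℝ → ℝ := fun t => ⟪J' t, J t⟫ - a t * ⟪J t, J t⟫ with hφdef
  set φ' : ℝ → ℝ := fun t =>
    (⟪J' t, J' t⟫ + ⟪-(R t (J t)), J t⟫) -
      (a' t * ⟪J t, J t⟫ + a t * (⟪J t, J' t⟫ + ⟪J' t, J t⟫)) with hφ'def
  have hφd : ∀ t, HasDerivAt φ (φ' t) t := fun t =>
    ((hJ'' t).inner ℝ (hJ t)).sub ((ha t).mul ((hJ t).inner ℝ (hJ t)))
  have hφ'nn : ∀ t, 0 ≤ φ' t := by
    intro t
    have h := hcurv t (J t)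
    rw [← real_inner_self_eq_norm_sq] at h
    have hsq : (0:ℝ) ≤ ⟪J' t - a t • J t, J' t - a t • J t⟫ := real_inner_self_nonneg
    rw [inner_sub_sub_self] at hsq
    simp only [real_inner_smul_left, real_inner_smul_right, real_inner_comm (J t) (J' t)] at hsq ⊢
    simp only [hφ'def, inner_neg_left, real_inner_comm (J t) (J' t)]
    nlinarith [hsq, h]
  have hφmono : Monotone φ :=
    monotone_of_deriv_nonneg (fun t => (hφd t).differentiableAt)
      (fun t => (hφd t).deriv ▸ hφ'nn t)
  have hφ0 : φ 0 = 0 := by simp [hφdef, hJ0]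
  have hφnn : ∀ t, 0 ≤ t → 0 ≤ φ t := fun t ht => hφ0 ▸ hφmono ht
  constructor
  · intro t ht
    have := hφnn t ht
    rwa [inner_sub_left, real_inner_smul_left]
  · have hgd : ∀ t, HasDerivAt (fun t => Real.exp (-2 * F t) * ‖J t‖ ^ 2)
        (Real.exp (-2 * F t) * (2 * φ t)) t := by
      intro t
      have h1 : HasDerivAt (fun t => Real.exp (-2 * F t)) (Real.exp (-2 * F t) * (-2 * a t)) t :=
        ((hF t).const_mul (-2)).exp
      have h2 : HasDerivAt (fun t => ‖J t‖ ^ 2 : ℝ → ℝ) (⟪J t, J' t⟫ + ⟪J' t, J t⟫) t := by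
        have := (hJ t).inner ℝ (hJ t)
        simpa [real_inner_self_eq_norm_sq] using this
      have := h1.fun_mul h2
      convert this using 1
      · rfl
      · rfl
      simp only [hφdef, real_inner_comm (J t) (J' t), real_inner_self_eq_norm_sq]
      ring
    have hJc : Continuous J := by
      rw [continuous_iff_continuousAt]; exact fun t => (hJ t).continuousAt
    have hFc : Continuous F := by
      rw [continuous_iff_continuousAt]; exact fun t => (hF t).continuousAt
    apply monotoneOn_of_deriv_nonneg (convex_Ici 0)
      (Continuous.continuousOn (by fun_prop))
      (fun t _ => ((hgd t).differentiableAt).differentiableWithinAt)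
    intro t ht
    rw [(hgd t).deriv]
    have ht0 : (0:ℝ) ≤ t := le_of_lt (by simpa using ht)
    have := hφnn t ht0
    positivity
end

section
/- Key differential inequality for Jacobi fields under a weighted curvature upper bound: Let E be a real inner product space, let a : ℝ → ℝ be differentiable, let K ∈ ℝ, and let R : ℝ → (E →L[ℝ] E) be a continuous family of self-adjoint operators such that ⟨R(t)v, v⟩ + (a'(t) + a(t)²)·‖v‖² ≤ K·‖v‖² for every t ∈ ℝ and v ∈ E. Then for every twice differentiable J : ℝ → E with J''(t) = −R(t)(J(t)) for all t, the function h(t) = ⟨J'(t) − a(t)·J(t), J(t)⟩ is differentiable and satisfies h'(t) ≥ ‖J'(t) − a(t)·J(t)‖² − K·‖J(t)‖² for all t ∈ ℝ. -/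
open scoped RealInnerProductSpace

/-- **Key differential inequality for Jacobi fields under a weighted curvature
upper bound.** If `⟪R t v, v⟫ + (a' t + (a t)²) ‖v‖² ≤ K ‖v‖²` and `J'' = -R J`,
then `h t = ⟪J' t - a t • J t, J t⟫` is differentiable with
`h' t ≥ ‖J' t - a t • J t‖ ^ 2 - K ‖J t‖ ^ 2`. -/
theorem weighted_jacobi_differential_inequality
    {E : Type*} [NormedAddCommGroup E] [InnerProductSpace ℝ E]
    (a a' : ℝ → ℝ) (ha : ∀ t, HasDerivAt a (a' t) t)
    (K : ℝ)
    (R : ℝ → E →L[ℝ] E) (hRcont : Continuous R)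
    (hRsa : ∀ t (v w : E), ⟪R t v, w⟫ = ⟪v, R t w⟫)
    (hcurv : ∀ t (v : E), ⟪R t v, v⟫ + (a' t + (a t) ^ 2) * ‖v‖ ^ 2 ≤ K * ‖v‖ ^ 2)
    (J J' : ℝ → E)
    (hJ : ∀ t, HasDerivAt J (J' t) t)
    (hJ'' : ∀ t, HasDerivAt J' (-(R t (J t))) t) :
    ∀ t, ∃ d : ℝ,
      HasDerivAt (fun s => ⟪J' s - a s • J s, J s⟫) d t ∧
        ‖J' t - a t • J t‖ ^ 2 - K * ‖J t‖ ^ 2 ≤ d := by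
  intro t
  have hf : HasDerivAt (fun s => J' s - a s • J s)
      (-(R t (J t)) - (a t • J' t + a' t • J t)) t :=
    (hJ'' t).sub ((ha t).smul (hJ t))
  refine ⟨_, hf.inner ℝ (hJ t), ?_⟩
  have key := hcurv t (J t)
  have h1 : ‖J' t - a t • J t‖ ^ 2
      = ‖J' t‖ ^ 2 - 2 * a t * ⟪J' t, J t⟫ + a t ^ 2 * ‖J t‖ ^ 2 := by
    rw [← real_inner_self_eq_norm_sq, ← real_inner_self_eq_norm_sq,
      ← real_inner_self_eq_norm_sq]
    simp [inner_sub_sub_self, real_inner_smul_left, real_inner_smul_right,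
      real_inner_comm (J t) (J' t)]
    rw [norm_sub_sq_real, norm_smul, mul_pow, Real.norm_eq_abs, sq_abs, real_inner_smul_right,
      real_inner_comm (J t) (J' t)]
    ring
  rw [h1]
  simp only [inner_sub_left, inner_add_left, inner_add_right, inner_sub_right, inner_neg_left,
    real_inner_smul_left, real_inner_smul_right, real_inner_self_eq_norm_sq]
  rw [real_inner_comm (J t) (J' t)]
  linarith [key]
end

section
/- Riccati inequality for the logarithmic derivative of a weighted Jacobi field (step in the proof of Theorem 4.3): Let E be a real inner product space, let a : ℝ → ℝ be differentiable, let K ∈ ℝ, and let R : ℝ → (E →L[ℝ] E) be a continuous family of self-adjoint operators such that ⟨R(t)v, v⟩ + (a'(t) + a(t)²)·‖v‖² ≤ K·‖v‖² for every t ∈ ℝ and v ∈ E. Let F : ℝ → ℝ satisfy F' = a and set u = e^F. Let J : ℝ → E be twice differentiable with J''(t) = −R(t)(J(t)) for all t, and let I be an open interval on which J(t) ≠ 0. Then the function λ(t) = e^{2F(t)}·(⟨J'(t), J(t)⟩ − a(t)·‖J(t)‖²)/‖J(t)‖² is differentiable on I and satisfies λ'(t) ≥ −λ(t)²/u(t)²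 − K·u(t)² for all t ∈ I. -/
open scoped RealInnerProductSpace

/-- **Riccati inequality for the logarithmic derivative of a weighted Jacobi
field.** With `F' = a`, `u = e^F`, and `J'' = -R J`, on any open interval where
`J ≠ 0` the function `λ t = e^{2F t}(⟪J' t, J t⟫ - a t ‖J t‖²)/‖J t‖²` is
differentiable and satisfies `λ' ≥ -λ²/u² - K u²`. -/
theorem weighted_jacobi_riccati_inequality
    {E : Type*} [NormedAddCommGroup E] [InnerProductSpace ℝ E]
    (a a' : ℝ → ℝ) (ha : ∀ t, HasDerivAt a (a' t) t)
    (K : ℝ)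
    (R : ℝ → E →L[ℝ] E) (hRcont : Continuous R)
    (hRsa : ∀ t (v w : E), ⟪R t v, w⟫ = ⟪v, R t w⟫)
    (hcurv : ∀ t (v : E), ⟪R t v, v⟫ + (a' t + (a t) ^ 2) * ‖v‖ ^ 2 ≤ K * ‖v‖ ^ 2)
    (F : ℝ → ℝ) (hF : ∀ t, HasDerivAt F (a t) t)
    (u : ℝ → ℝ) (hu : u = fun t => Real.exp (F t))
    (J J' : ℝ → E)
    (hJ : ∀ t, HasDerivAt J (J' t) t)
    (hJ'' : ∀ t, HasDerivAt J' (-(R t (J t))) t)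
    (t₁ t₂ : ℝ) (hne : ∀ t ∈ Set.Ioo t₁ t₂, J t ≠ 0)
    (lam : ℝ → ℝ)
    (hlam : lam = fun t =>
      Real.exp (2 * F t) * ((⟪J' t, J t⟫ - a t * ‖J t‖ ^ 2) / ‖J t‖ ^ 2)) :
    ∀ t ∈ Set.Ioo t₁ t₂, ∃ d : ℝ,
      HasDerivAt lam d t ∧ -(lam t) ^ 2 / (u t) ^ 2 - K * (u t) ^ 2 ≤ d := by
  subst hlam hu
  intro t ht
  have hJt : J t ≠ 0 := hne t ht
  have hnormpos : 0 < ‖J t‖ := norm_pos_iff.mpr hJt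
  have hnpos : 0 < ‖J t‖ ^ 2 := by positivity
  have hn0 : ‖J t‖ ^ 2 ≠ 0 := ne_of_gt hnpos
  -- derivative of ‖J s‖²
  have hN : ∀ s, HasDerivAt (fun s => ‖J s‖ ^ 2) (2 * ⟪J' s, J s⟫) s := by
    intro s
    have h := (hJ s).inner ℝ (hJ s)
    simp only [real_inner_self_eq_norm_sq] at h
    refine h.congr_deriv ?_
    rw [real_inner_comm (J s) (J' s)]; ring
  -- derivative of ⟪J' s, J s⟫
  have hP : ∀ s, HasDerivAt (fun s => ⟪J' s, J s⟫)
      (‖J' s‖ ^ 2 - ⟪R s (J s), J s⟫) s := by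
    intro s
    have h := (hJ'' s).inner ℝ (hJ s)
    simp only [inner_neg_left, real_inner_self_eq_norm_sq] at h
    exact h.congr_deriv (by ring)
  have hnum : HasDerivAt (fun s => ⟪J' s, J s⟫ - a s * ‖J s‖ ^ 2)
      ((‖J' t‖ ^ 2 - ⟪R t (J t), J t⟫)
        - (a' t * ‖J t‖ ^ 2 + a t * (2 * ⟪J' t, J t⟫))) t :=
    (hP t).sub ((ha t).mul (hN t))
  have hq : HasDerivAt (fun s => (⟪J' s, J s⟫ - a s * ‖J s‖ ^ 2) / ‖J s‖ ^ 2)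
      ((((‖J' t‖ ^ 2 - ⟪R t (J t), J t⟫)
          - (a' t * ‖J t‖ ^ 2 + a t * (2 * ⟪J' t, J t⟫))) * ‖J t‖ ^ 2
        - (⟪J' t, J t⟫ - a t * ‖J t‖ ^ 2) * (2 * ⟪J' t, J t⟫)) / (‖J t‖ ^ 2) ^ 2) t :=
    hnum.div (hN t) hn0
  have hE : HasDerivAt (fun s => Real.exp (2 * F s)) (Real.exp (2 * F t) * (2 * a t)) t :=
    ((hF t).const_mul 2).exp
  refine ⟨_, hE.mul hq, ?_⟩
  beta_reduce
  -- the inequality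
  set p := ⟪J' t, J t⟫ with hp
  set r := ⟪R t (J t), J t⟫ with hr
  set n := ‖J t‖ ^ 2 with hnn
  set A := a t with hA
  set A' := a' t with hA'
  have he2 : Real.exp (2 * F t) = Real.exp (F t) ^ 2 := by
    rw [two_mul, Real.exp_add]; ring
  set e := Real.exp (F t) with he
  have hepos : 0 < e := Real.exp_pos _
  have he0 : e ≠ 0 := ne_of_gt hepos
  rw [he2]
  have key : r * n ≤ (K - A' - A ^ 2) * n * n := by
    have h1 := hcurv t (J t)
    rw [← hnn, ← hA, ← hA', ← hr] at h1
    nlinarith [hnpos]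
  have cs : p ^ 2 ≤ ‖J' t‖ ^ 2 * n := by
    have h := abs_real_inner_le_norm (J' t) (J t)
    have h2 : p ^ 2 = |p| ^ 2 := (sq_abs p).symm
    rw [hnn]
    nlinarith [abs_nonneg p, norm_nonneg (J' t), norm_nonneg (J t)]
  -- reduce to pure algebra
  have base : -((p - A * n) / n) ^ 2 - K
      ≤ 2 * A * ((p - A * n) / n)
        + (((‖J' t‖ ^ 2 - r) - (A' * n + A * (2 * p))) * n
            - (p - A * n) * (2 * p)) / n ^ 2 := by
    have expand : 2 * A * ((p - A * n) / n)
        + (((‖J' t‖ ^ 2 - r) - (A' * n + A * (2 * p))) * n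
            - (p - A * n) * (2 * p)) / n ^ 2
        = (2 * A * (p - A * n) * n + (((‖J' t‖ ^ 2 - r) - (A' * n + A * (2 * p))) * n
            - (p - A * n) * (2 * p))) / n ^ 2 := by
      field_simp
    have lhseq : -((p - A * n) / n) ^ 2 - K
        = (-(p - A * n) ^ 2 - K * n ^ 2) / n ^ 2 := by
      field_simp
    rw [expand, lhseq, div_le_div_iff₀ (by positivity) (by positivity)]
    nlinarith [key, cs, hnpos]
  calc -(e ^ 2 * ((p - A * n) / n)) ^ 2 / e ^ 2 - K * e ^ 2
      = e ^ 2 * (-((p - A * n) / n) ^ 2 - K) := by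
        field_simp
    _ ≤ e ^ 2 * (2 * A * ((p - A * n) / n)
        + (((‖J' t‖ ^ 2 - r) - (A' * n + A * (2 * p))) * n
            - (p - A * n) * (2 * p)) / n ^ 2) := by
        apply mul_le_mul_of_nonneg_left base (by positivity)
    _ = e ^ 2 * (2 * A) * ((p - A * n) / n)
        + e ^ 2 * ((((‖J' t‖ ^ 2 - r) - (A' * n + A * (2 * p))) * n
            - (p - A * n) * (2 * p)) / n ^ 2) := by ring
end

section
/- Lower Riccati comparison lemma (used in the proof of Theorem 4.3): Let K > 0, T > 0, and 0 < p ≤ q, and let u : (0,T) → ℝ satisfy p ≤ u(t) ≤ q for all t ∈ (0,T). Suppose λ : (0,T) → ℝ is differentiable with λ'(t) ≥ −λ(t)²/u(t)² − K·u(t)² for all t ∈ (0,T), and λ(t) → +∞ as t → 0⁺. Then λ(t) ≥ p·q·√K·cot((q·√K/p)·t) for all t ∈ (0, min(T, (p/q)·(π/√K))). -/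
open Real Filter Set Topology

lemma my_hasDerivAt_cot {x : ℝ} (hx : Real.sin x ≠ 0) :
    HasDerivAt Real.cot (-(1 / Real.sin x ^ 2)) x := by
  have h := (Real.hasDerivAt_cos x).div (Real.hasDerivAt_sin x) hx
  have heq : (-Real.sin x * Real.sin x - Real.cos x * Real.cos x) / Real.sin x ^ 2
      = -(1 / Real.sin x ^ 2) := by
    have := Real.sin_sq_add_cos_sq x
    field_simp
    nlinarith [this]
  rw [heq] at h
  exact h.congr_of_eventuallyEq (Filter.Eventually.of_forall fun y => Real.cot_eq_cos_div_sin y)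

lemma my_continuousAt_cot {x : ℝ} (hx : Real.sin x ≠ 0) : ContinuousAt Real.cot x :=
  (my_hasDerivAt_cot hx).continuousAt

set_option maxHeartbeats 1000000 in
/-- **Lower Riccati comparison lemma.** If `λ' ≥ -λ²/u² - K u²` with
`p ≤ u ≤ q` on `(0, T)` and `λ → +∞` as `t → 0⁺`, then
`λ t ≥ p q √K · cot((q √K / p) t)` on `(0, min T ((p/q)·π/√K))`. -/
theorem lower_riccati_comparison
    (K T p q : ℝ) (hK : 0 < K) (hT : 0 < T) (hp : 0 < p) (hpq : p ≤ q)
    (u : ℝ → ℝ) (hu : ∀ t ∈ Set.Ioo (0 : ℝ) T, p ≤ u t ∧ u t ≤ q)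
    (lam lam' : ℝ → ℝ)
    (hlam : ∀ t ∈ Set.Ioo (0 : ℝ) T, HasDerivAt lam (lam' t) t)
    (hineq : ∀ t ∈ Set.Ioo (0 : ℝ) T,
      -(lam t) ^ 2 / (u t) ^ 2 - K * (u t) ^ 2 ≤ lam' t)
    (hblow : Filter.Tendsto lam (nhdsWithin 0 (Set.Ioi 0)) Filter.atTop) :
    ∀ t ∈ Set.Ioo (0 : ℝ) (min T (p / q * (Real.pi / Real.sqrt K))),
      p * q * Real.sqrt K * Real.cot (q * Real.sqrt K / p * t) ≤ lam t := by
  intro t ht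
  obtain ⟨ht0, htm⟩ := ht
  rw [lt_min_iff] at htm
  obtain ⟨htT, htpi⟩ := htm
  have hq : 0 < q := lt_of_lt_of_le hp hpq
  have hsK : 0 < Real.sqrt K := Real.sqrt_pos.mpr hK
  have hθ0 : 0 < q * Real.sqrt K / p * t := by positivity
  have hθπ : q * Real.sqrt K / p * t < Real.pi := by
    have h := mul_lt_mul_of_pos_left htpi (show 0 < q * Real.sqrt K / p by positivity)
    calc q * Real.sqrt K / p * t < q * Real.sqrt K / p * (p / q * (Real.pi / Real.sqrt K)) := h
      _ = Real.pi := by field_simp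
  -- continuity of the inner argument as a function of the perturbation δ
  have hinner : ContinuousAt (fun δ : ℝ => q * Real.sqrt (K + δ) / p * (t + δ)) 0 := by
    fun_prop
  have h00 : (fun δ : ℝ => q * Real.sqrt (K + δ) / p * (t + δ)) 0
      = q * Real.sqrt K / p * t := by norm_num
  have hsin0 : Real.sin (q * Real.sqrt K / p * t) ≠ 0 :=
    (Real.sin_pos_of_pos_of_lt_pi hθ0 hθπ).ne'
  have htend : Tendsto (fun δ : ℝ => p * q * Real.sqrt (K + δ) *
        Real.cot (q * Real.sqrt (K + δ) / p * (t + δ))) (𝓝[>] (0:ℝ))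
        (𝓝 (p * q * Real.sqrt K * Real.cot (q * Real.sqrt K / p * t))) := by
    have hCA : ContinuousAt (fun δ : ℝ => p * q * Real.sqrt (K + δ) *
        Real.cot (q * Real.sqrt (K + δ) / p * (t + δ))) 0 := by
      have hsin0' : Real.sin ((fun δ : ℝ => q * Real.sqrt (K + δ) / p * (t + δ)) 0) ≠ 0 := by
        simpa using hsin0
      have hc2 : ContinuousAt (fun δ : ℝ =>
          Real.cot (q * Real.sqrt (K + δ) / p * (t + δ))) 0 :=
        ContinuousAt.comp (g := Real.cot)
          (f := fun δ : ℝ => q * Real.sqrt (K + δ) / p * (t + δ))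
          (my_continuousAt_cot hsin0') hinner
      exact ContinuousAt.mul (by fun_prop) hc2
    have h' : Tendsto (fun δ : ℝ => p * q * Real.sqrt (K + δ) *
        Real.cot (q * Real.sqrt (K + δ) / p * (t + δ))) (𝓝[>] (0:ℝ))
        (𝓝 (p * q * Real.sqrt (K + 0) * Real.cot (q * Real.sqrt (K + 0) / p * (t + 0)))) :=
      hCA.tendsto.mono_left nhdsWithin_le_nhds
    simpa using h' 
  have hev : ∀ᶠ δ in 𝓝[>] (0:ℝ), p * q * Real.sqrt (K + δ) *
      Real.cot (q * Real.sqrt (K + δ) / p * (t + δ)) ≤ lam t := by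
    have hev1 : ∀ᶠ δ in 𝓝 (0:ℝ), q * Real.sqrt (K + δ) / p * (t + δ) < Real.pi :=
      hinner.eventually_lt continuousAt_const (by simpa using hθπ)
    filter_upwards [hev1.filter_mono nhdsWithin_le_nhds, self_mem_nhdsWithin] with δ hδπ hδ0
    rw [Set.mem_Ioi] at hδ0
    set Kd := K + δ with hKd_def
    have hKd : 0 < Kd := by positivity
    set sKd := Real.sqrt Kd with hsKd_def
    have hsKd : 0 < sKd := Real.sqrt_pos.mpr hKd
    have hsKd2 : sKd ^ 2 = Kd := Real.sq_sqrt hKd.le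
    set cd := q * sKd / p with hcd_def
    have hcd : 0 < cd := by rw [hcd_def]; positivity
    set B : ℝ → ℝ := fun s => p * q * sKd * Real.cot (cd * (s + δ)) with hB_def
    set B' : ℝ → ℝ := fun s => -(q ^ 2 * Kd) / (Real.sin (cd * (s + δ))) ^ 2 with hB'_def
    have hrange : ∀ s ∈ Icc (0:ℝ) t, 0 < cd * (s + δ) ∧ cd * (s + δ) < Real.pi := by
      intro s hs
      constructor
      · have : 0 < s + δ := by linarith [hs.1]
        positivity
      · have h1 : cd * (s + δ) ≤ cd * (t + δ) := by
          apply mul_le_mul_of_nonneg_left (by linarith [hs.2]) hcd.le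
        exact lt_of_le_of_lt h1 hδπ
    have hsin : ∀ s ∈ Icc (0:ℝ) t, 0 < Real.sin (cd * (s + δ)) := fun s hs =>
      Real.sin_pos_of_pos_of_lt_pi (hrange s hs).1 (hrange s hs).2
    have hBderiv : ∀ s ∈ Icc (0:ℝ) t, HasDerivAt B (B' s) s := by
      intro s hs
      have hS : Real.sin (cd * (s + δ)) ≠ 0 := (hsin s hs).ne'
      have h1 : HasDerivAt (fun x : ℝ => cd * (x + δ)) cd s := by
        simpa using ((hasDerivAt_id s).add_const δ).const_mul cd
      have h2 := ((my_hasDerivAt_cot hS).comp s h1).const_mul (p * q * sKd)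
      refine h2.congr_deriv (Eq.symm ?_)
      rw [hB'_def]
      have key : p * q * sKd * cd = q ^ 2 * Kd := by
        rw [hcd_def]
        field_simp
        linear_combination hsKd2
      calc -(q ^ 2 * Kd) / Real.sin (cd * (s + δ)) ^ 2
          = -(p * q * sKd * cd) / Real.sin (cd * (s + δ)) ^ 2 := by rw [key]
        _ = p * q * sKd * (-(1 / Real.sin (cd * (s + δ)) ^ 2) * cd) := by ring
    have hId : ∀ s ∈ Icc (0:ℝ) t, B' s = -(B s) ^ 2 / p ^ 2 - Kd * q ^ 2 := by
      intro s hs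
      have hS := (hsin s hs).ne'
      have hpyth := Real.sin_sq_add_cos_sq (cd * (s + δ))
      rw [hB'_def, hB_def]
      simp only
      have hC2 : Real.cos (cd * (s + δ)) ^ 2 = 1 - Real.sin (cd * (s + δ)) ^ 2 := by
        linarith
      rw [Real.cot_eq_cos_div_sin]
      simp only [mul_pow, div_pow]
      rw [hsKd2, hC2]
      field_simp
      ring
    -- pick a starting point a near 0 where lam dominates B
    have hBC : ContinuousAt B 0 := (hBderiv 0 ⟨le_refl _, ht0.le⟩).continuousAt
    have h1 : ∀ᶠ s in 𝓝 (0:ℝ), B s < B 0 + 1 :=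
      hBC.eventually_lt continuousAt_const (by linarith)
    have h2 : ∀ᶠ s in 𝓝[>] (0:ℝ), B 0 + 1 ≤ lam s := hblow.eventually_ge_atTop (B 0 + 1)
    have h3 : Ioo (0:ℝ) t ∈ 𝓝[>] (0:ℝ) := Ioo_mem_nhdsGT_of_mem ⟨le_refl _, ht0⟩
    obtain ⟨a, haB, halam, ha⟩ :=
      ((h1.filter_mono nhdsWithin_le_nhds).and (h2.and (eventually_of_mem h3 fun x hx => hx))).exists
    have hsub : Icc a t ⊆ Icc 0 t := Icc_subset_Icc ha.1.le le_rfl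
    have hsub2 : Icc a t ⊆ Ioo 0 T := fun s hs =>
      ⟨lt_of_lt_of_le ha.1 hs.1, lt_of_le_of_lt hs.2 htT⟩
    have hfence : ∀ x ∈ Icc a t, B x ≤ lam x := by
      apply image_le_of_deriv_right_lt_deriv_boundary' (f := B) (f' := B') (B := lam)
        (B' := lam')
      · exact fun s hs => (hBderiv s (hsub hs)).continuousAt.continuousWithinAt
      · exact fun s hs => (hBderiv s (hsub ⟨hs.1, hs.2.le⟩)).hasDerivWithinAt
      · exact le_trans haB.le halam
      · exact fun s hs => (hlam s (hsub2 hs)).continuousAt.continuousWithinAt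
      · exact fun s hs => (hlam s (hsub2 ⟨hs.1, hs.2.le⟩)).hasDerivWithinAt
      · intro s hs heq
        have hs0t : s ∈ Icc (0:ℝ) t := hsub ⟨hs.1, hs.2.le⟩
        have hsT : s ∈ Ioo 0 T := hsub2 ⟨hs.1, hs.2.le⟩
        obtain ⟨hup, huq⟩ := hu s hsT
        have hu0 : 0 < u s := lt_of_lt_of_le hp hup
        rw [hId s hs0t, heq]
        have hmain := hineq s hsT
        have hple : p ^ 2 ≤ (u s) ^ 2 := by nlinarith
        have hd1 : (lam s) ^ 2 / (u s) ^ 2 ≤ (lam s) ^ 2 / p ^ 2 :=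
          div_le_div_of_nonneg_left (sq_nonneg _) (by positivity) hple
        have hd1' : -(lam s) ^ 2 / p ^ 2 ≤ -(lam s) ^ 2 / (u s) ^ 2 := by
          rw [neg_div, neg_div]; linarith
        have husq : (u s) ^ 2 ≤ q ^ 2 := by nlinarith
        have hd2 : K * (u s) ^ 2 ≤ K * q ^ 2 := mul_le_mul_of_nonneg_left husq hK.le
        have hd3 : 0 < δ * q ^ 2 := by positivity
        have hKdq : Kd * q ^ 2 = K * q ^ 2 + δ * q ^ 2 := by rw [hKd_def]; ring
        linarith
    exact hfence t ⟨ha.2.le, le_refl _⟩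
  exact le_of_tendsto htend hev
end

section
/- Weighted conjugate radius estimate along a geodesic (Theorem 4.3, analytic form): Let E be a real inner product space, let a : ℝ → ℝ be differentiable, let K > 0, and let R : ℝ → (E →L[ℝ] E) be a continuous family of self-adjoint operators such that ⟨R(t)v, v⟩ + (a'(t) + a(t)²)·‖v‖² ≤ K·‖v‖² for every t ∈ ℝ and v ∈ E. Let J : ℝ → E be twice differentiable with J''(t) = −R(t)(J(t)) for all t, with J not identically zero, and suppose J(t₁) = 0 and J(t₂) = 0 with t₁ < t₂. Let F : ℝ → ℝ satisfy F' = a, and let u_min and u_max denote the minimum and maximum of e^{F} on [t₁, t₂]. Then t₂ − t₁ ≥ (u_min/u_max)·(π/√K). -/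
open scoped RealInnerProductSpace
open Real Set Filter intervalIntegral MeasureTheory


set_option maxHeartbeats 1000000 in
theorem wirtinger_aux {E : Type*} [NormedAddCommGroup E] [InnerProductSpace ℝ E]
    (H H' : ℝ → E) (hH : ∀ t, HasDerivAt H (H' t) t) (hH' : Continuous H')
    (t₁ t₂ : ℝ) (ht : t₁ < t₂) (h1 : H t₁ = 0) (h2 : H t₂ = 0) :
    (Real.pi / (t₂ - t₁))^2 * ∫ t in t₁..t₂, ‖H t‖^2 ≤ ∫ t in t₁..t₂, ‖H' t‖^2 := by
  have hHc : Continuous H := by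
    refine continuous_iff_continuousAt.2 fun t => (hH t).continuousAt
  set L : ℝ := t₂ - t₁ with hL
  have hLpos : 0 < L := by simp only [hL]; linarith
  set ω : ℝ := Real.pi / L with hω
  have hωpos : 0 < ω := div_pos Real.pi_pos hLpos
  have hωL : ω * L = Real.pi := by rw [hω]; exact div_mul_cancel₀ _ hLpos.ne'
  -- the function f
  set f : ℝ → ℝ := fun t => ‖H' t‖^2 - ω^2 * ‖H t‖^2 with hf
  have hfc : Continuous f := by fun_prop
  -- bound M for ‖H‖² on the interval
  obtain ⟨M, hM⟩ : ∃ M, ∀ t ∈ Icc t₁ t₂, ‖H t‖^2 ≤ M := by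
    obtain ⟨M, hM⟩ := (isCompact_Icc (a := t₁) (b := t₂)).exists_bound_of_continuousOn
      ((hHc.norm.pow 2).continuousOn)
    exact ⟨M, fun t htt => le_trans (le_abs_self _) (hM t htt)⟩
  -- cotangent-type test function
  set s : ℝ → ℝ := fun θ => Real.sin (ω * (θ - t₁)) with hs
  set c : ℝ → ℝ := fun θ => Real.cos (ω * (θ - t₁)) with hc
  set φ : ℝ → ℝ := fun θ => ω * (c θ / s θ) with hφ
  have hspos : ∀ θ ∈ Ioo t₁ t₂, 0 < s θ := by
    intro θ hθ
    apply Real.sin_pos_of_pos_of_lt_pi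
    · exact mul_pos hωpos (by linarith [hθ.1])
    · calc ω * (θ - t₁) < ω * L := by
            apply mul_lt_mul_of_pos_left _ hωpos
            simp only [hL]; linarith [hθ.2]
        _ = Real.pi := hωL
  -- derivative of φ
  have hsder : ∀ θ, HasDerivAt s (ω * c θ) θ := by
    intro θ
    have : HasDerivAt (fun x : ℝ => ω * (x - t₁)) ω θ := by
      simpa using ((hasDerivAt_id θ).sub_const t₁).const_mul ω
    simpa [hs, hc, mul_comm, Function.comp_def] using (Real.hasDerivAt_sin (ω * (θ - t₁))).comp θ this
  have hcder : ∀ θ, HasDerivAt c (-(ω * s θ)) θ := by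
    intro θ
    have : HasDerivAt (fun x : ℝ => ω * (x - t₁)) ω θ := by
      simpa using ((hasDerivAt_id θ).sub_const t₁).const_mul ω
    have := (Real.hasDerivAt_cos (ω * (θ - t₁))).comp θ this
    simpa [hs, hc, mul_comm, Function.comp_def] using this
  have hφder : ∀ θ ∈ Ioo t₁ t₂, HasDerivAt φ (-(ω^2) - (φ θ)^2) θ := by
    intro θ hθ
    have hsne : s θ ≠ 0 := ne_of_gt (hspos θ hθ)
    have h := ((hcder θ).div (hsder θ) hsne).const_mul ω
    have hsc : s θ^2 + c θ^2 = 1 := by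
      simpa [hs, hc] using Real.sin_sq_add_cos_sq (ω * (θ - t₁))
    refine h.congr_deriv ?_
    have hφθ : φ θ = ω * (c θ / s θ) := rfl
    rw [hφθ]
    field_simp
  -- derivative of ‖H‖²
  have hnder : ∀ θ, HasDerivAt (fun x => ‖H x‖^2) (2 * ⟪H θ, H' θ⟫) θ := by
    intro θ
    have h := (hH θ).inner ℝ (hH θ)
    have : (fun x => ⟪H x, H x⟫) = fun x => ‖H x‖^2 := by
      funext x; exact real_inner_self_eq_norm_sq (H x)
    rw [this] at h
    refine h.congr_deriv ?_
    rw [real_inner_comm]; ring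
  -- P and its derivative
  set P : ℝ → ℝ := fun θ => φ θ * ‖H θ‖^2 with hP
  set g : ℝ → ℝ := fun θ => f θ - ‖H' θ - φ θ • H θ‖^2 with hg
  have hPder : ∀ θ ∈ Ioo t₁ t₂, HasDerivAt P (g θ) θ := by
    intro θ hθ
    have h := (hφder θ hθ).mul (hnder θ)
    refine h.congr_deriv ?_
    have hexp : ‖H' θ - φ θ • H θ‖^2
        = ‖H' θ‖^2 - 2 * (φ θ * ⟪H θ, H' θ⟫) + (φ θ)^2 * ‖H θ‖^2 := by
      rw [norm_sub_sq_real, real_inner_smul_right, norm_smul]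
      rw [real_inner_comm]
      simp [mul_pow, sq_abs]
      try ring
    simp only [hg, hf, hexp]
    try ring
  -- continuity of φ on closed subintervals of Ioo
  have hφcont : ContinuousOn φ (Ioo t₁ t₂) := by
    apply ContinuousOn.mul continuousOn_const
    apply ContinuousOn.div
    · fun_prop
    · fun_prop
    · intro θ hθ; exact ne_of_gt (hspos θ hθ)
  -- the main estimate for each ε
  have key : ∀ ε ∈ Ioo (0:ℝ) (L/2),
      -(2 * (ω^2 * M) * ε) - ‖H (t₁+ε)‖^2/ε - ‖H (t₂-ε)‖^2/ε ≤ ∫ t in t₁..t₂, f t := by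
    intro ε hε
    obtain ⟨hε0, hεL⟩ := hε
    set x := t₁ + ε with hx
    set y := t₂ - ε with hy
    have hxy : x < y := by simp only [hx, hy, hL] at *; linarith
    have hx1 : t₁ < x := by simp [hx]; linarith
    have hy2 : y < t₂ := by simp [hy]; linarith
    have hsubIoo : Icc x y ⊆ Ioo t₁ t₂ := fun θ hθ => ⟨lt_of_lt_of_le hx1 hθ.1, lt_of_le_of_lt hθ.2 hy2⟩
    -- integrability pieces
    have hfint : ∀ u v : ℝ, IntervalIntegrable f MeasureTheory.volume u v :=
      fun u v => hfc.intervalIntegrable u v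
    have hqcont : ContinuousOn (fun θ => ‖H' θ - φ θ • H θ‖^2) (Icc x y) := by
      apply ContinuousOn.pow
      apply ContinuousOn.norm
      exact (hH'.continuousOn).sub ((hφcont.mono hsubIoo).smul (hHc.continuousOn))
    have hqint : IntervalIntegrable (fun θ => ‖H' θ - φ θ • H θ‖^2) MeasureTheory.volume x y := by
      apply ContinuousOn.intervalIntegrable
      rwa [uIcc_of_le hxy.le]
    have hgint : IntervalIntegrable g MeasureTheory.volume x y := by
      apply ContinuousOn.intervalIntegrable
      rw [uIcc_of_le hxy.le]
      exact (hfc.continuousOn).sub hqcont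
    -- FTC on [x,y]
    have hftc : ∫ θ in x..y, g θ = P y - P x := by
      apply intervalIntegral.integral_eq_sub_of_hasDerivAt
      · intro θ hθ
        rw [uIcc_of_le hxy.le] at hθ
        exact hPder θ (hsubIoo hθ)
      · exact hgint
    have hmid : P y - P x ≤ ∫ θ in x..y, f θ := by
      have hsplit : ∫ θ in x..y, f θ = (∫ θ in x..y, g θ) + ∫ θ in x..y, ‖H' θ - φ θ • H θ‖^2 := by
        rw [← intervalIntegral.integral_add hgint hqint]
        congr 1; funext θ; simp [hg]
      rw [hsplit, hftc]
      have : 0 ≤ ∫ θ in x..y, ‖H' θ - φ θ • H θ‖^2 :=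
        intervalIntegral.integral_nonneg hxy.le (fun u _ => by positivity)
      linarith
    -- edge estimates
    have hedge1 : -(ω^2 * M) * ε ≤ ∫ θ in t₁..x, f θ := by
      have : ∫ θ in t₁..x, (-(ω^2 * M)) = -(ω^2*M) * ε := by
        simp [hx]; ring
      rw [← this]
      apply intervalIntegral.integral_mono_on hx1.le (intervalIntegrable_const) (hfint t₁ x)
      intro θ hθ
      have hθI : θ ∈ Icc t₁ t₂ := ⟨hθ.1, le_trans hθ.2 (by linarith)⟩
      have := hM θ hθI
      have h2 : (0:ℝ) ≤ ‖H' θ‖^2 := by positivity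
      simp only [hf]
      nlinarith [sq_nonneg ω]
    have hedge2 : -(ω^2 * M) * ε ≤ ∫ θ in y..t₂, f θ := by
      have : ∫ θ in y..t₂, (-(ω^2 * M)) = -(ω^2*M) * ε := by
        simp [hy]; ring
      rw [← this]
      apply intervalIntegral.integral_mono_on hy2.le (intervalIntegrable_const) (hfint y t₂)
      intro θ hθ
      have hθI : θ ∈ Icc t₁ t₂ := ⟨le_trans (by linarith) hθ.1, hθ.2⟩
      have := hM θ hθI
      have h2 : (0:ℝ) ≤ ‖H' θ‖^2 := by positivity
      simp only [hf]
      nlinarith [sq_nonneg ω]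
    -- bounds on φ at x and y
    have hωε1 : 0 < ω * ε := mul_pos hωpos hε0
    have hωε2 : ω * ε < Real.pi / 2 := by
      have : ω * ε < ω * (L/2) := by exact mul_lt_mul_of_pos_left hεL hωpos
      calc ω * ε < ω * (L/2) := this
        _ = Real.pi/2 := by rw [← hωL]; ring
    have htan : ω * ε < Real.tan (ω * ε) := Real.lt_tan hωε1 hωε2
    have hsinpos : 0 < Real.sin (ω*ε) := Real.sin_pos_of_pos_of_lt_pi hωε1 (by linarith [Real.pi_pos])
    have hcospos : 0 < Real.cos (ω*ε) := Real.cos_pos_of_mem_Ioo ⟨by linarith [Real.pi_pos], hωε2⟩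
    have hcotle : ω * (Real.cos (ω*ε) / Real.sin (ω*ε)) ≤ 1/ε := by
      rw [Real.tan_eq_sin_div_cos] at htan
      have h1 : ω * ε * Real.cos (ω*ε) ≤ Real.sin (ω*ε) := by
        have h2 := mul_lt_mul_of_pos_right htan hcospos
        rw [div_mul_cancel₀ _ hcospos.ne'] at h2
        linarith
      rw [mul_div_assoc'] at *
      rw [div_le_div_iff₀ hsinpos hε0]
      nlinarith
    have hφx : φ x ≤ 1/ε := by
      have hs' : s x = Real.sin (ω*ε) := by
        simp only [hs, hx]; congr 1; ring
      have hc' : c x = Real.cos (ω*ε) := by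
        simp only [hc, hx]; congr 1; ring
      simp only [hφ, hs', hc']
      exact hcotle
    have hφy : -(1/ε) ≤ φ y := by
      have harg : ω * (y - t₁) = Real.pi - ω * ε := by
        have h5 : ω * (y - t₁) = ω * L - ω * ε := by
          simp only [hy, hL]; ring
        rw [h5, hωL]
      have hsy : s y = Real.sin (ω*ε) := by
        simp only [hs, harg, Real.sin_pi_sub]
      have hcy : c y = -Real.cos (ω*ε) := by
        simp only [hc, harg, Real.cos_pi_sub]
      simp only [hφ, hsy, hcy]
      have : ω * (-Real.cos (ω*ε) / Real.sin (ω*ε)) = -(ω * (Real.cos (ω*ε)/Real.sin (ω*ε))) := by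
        ring
      rw [this]
      linarith [hcotle]
    have hPx : -P x ≥ -(‖H x‖^2/ε) := by
      have h0 : (0:ℝ) ≤ ‖H x‖^2 := by positivity
      have : P x ≤ (1/ε) * ‖H x‖^2 := by
        simp only [hP]; exact mul_le_mul_of_nonneg_right hφx h0
      have heq : (1/ε) * ‖H x‖^2 = ‖H x‖^2/ε := by ring
      linarith [this, heq ▸ this]
    have hPy : P y ≥ -(‖H y‖^2/ε) := by
      have h0 : (0:ℝ) ≤ ‖H y‖^2 := by positivity
      have : -(1/ε) * ‖H y‖^2 ≤ P y := by
        simp only [hP]; exact mul_le_mul_of_nonneg_right hφy h0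
      calc -(‖H y‖^2/ε) = -(1/ε) * ‖H y‖^2 := by ring
        _ ≤ P y := this
    -- assemble
    have hsplit2 : ∫ θ in t₁..t₂, f θ
        = (∫ θ in t₁..x, f θ) + (∫ θ in x..y, f θ) + ∫ θ in y..t₂, f θ := by
      rw [intervalIntegral.integral_add_adjacent_intervals (hfint t₁ x) (hfint x y),
        intervalIntegral.integral_add_adjacent_intervals (hfint t₁ y) (hfint y t₂)]
    rw [hsplit2]
    linarith [hedge1, hedge2, hmid, hPx, hPy]
  -- the limit of the lower bound
  have hlim : Tendsto (fun ε => -(2 * (ω^2 * M) * ε) - ‖H (t₁+ε)‖^2/ε - ‖H (t₂-ε)‖^2/ε)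
      (nhdsWithin 0 (Ioi 0)) (nhds 0) := by
    have l1 : Tendsto (fun ε : ℝ => -(2 * (ω^2 * M) * ε)) (nhdsWithin 0 (Ioi 0)) (nhds 0) := by
      have hcont : Continuous (fun ε : ℝ => -(2*(ω^2*M)*ε)) := by fun_prop
      exact (hcont.tendsto' 0 0 (by simp)).mono_left nhdsWithin_le_nhds
    have l2 : Tendsto (fun ε => ‖H (t₁+ε)‖^2/ε) (nhdsWithin 0 (Ioi 0)) (nhds 0) := by
      have hmap : Tendsto (fun ε : ℝ => t₁ + ε) (nhdsWithin 0 (Ioi 0)) (nhdsWithin t₁ {t₁}ᶜ) := by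
        apply tendsto_nhdsWithin_of_tendsto_nhds_of_eventually_within
        · have hcont : Continuous (fun ε : ℝ => t₁ + ε) := by fun_prop
          exact (hcont.tendsto' 0 t₁ (by simp)).mono_left nhdsWithin_le_nhds
        · filter_upwards [self_mem_nhdsWithin] with ε (hε : ε ∈ Ioi 0)
          simp only [mem_compl_iff, mem_singleton_iff]
          intro h
          have : ε = 0 := by linarith [h]
          exact absurd this (ne_of_gt hε)
      have hslope := (hasDerivAt_iff_tendsto_slope.1 (hH t₁)).comp hmap
      have hnorm : Tendsto (fun ε => ‖slope H t₁ (t₁+ε)‖) (nhdsWithin 0 (Ioi 0)) (nhds ‖H' t₁‖) :=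
        hslope.norm
      have hHn : Tendsto (fun ε => ‖H (t₁+ε)‖) (nhdsWithin 0 (Ioi 0)) (nhds 0) := by
        have : Tendsto (fun ε : ℝ => ‖H (t₁+ε)‖) (nhds 0) (nhds ‖H t₁‖) := by
          exact ((hHc.comp (continuous_const.add continuous_id)).norm).tendsto' 0 _ (by simp)
        rw [h1, norm_zero] at this
        exact this.mono_left nhdsWithin_le_nhds
      have := hnorm.mul hHn
      rw [mul_zero] at this
      apply this.congr'
      filter_upwards [self_mem_nhdsWithin] with ε (hε : ε ∈ Ioi 0)
      have hεne : (ε:ℝ) ≠ 0 := ne_of_gt hε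
      rw [slope_def_module]
      rw [h1, sub_zero, add_sub_cancel_left]
      rw [norm_smul, norm_inv, Real.norm_eq_abs, abs_of_pos hε]
      field_simp
    have l3 : Tendsto (fun ε => ‖H (t₂-ε)‖^2/ε) (nhdsWithin 0 (Ioi 0)) (nhds 0) := by
      have hmap : Tendsto (fun ε : ℝ => t₂ - ε) (nhdsWithin 0 (Ioi 0)) (nhdsWithin t₂ {t₂}ᶜ) := by
        apply tendsto_nhdsWithin_of_tendsto_nhds_of_eventually_within
        · have hcont : Continuous (fun ε : ℝ => t₂ - ε) := by fun_prop
          exact (hcont.tendsto' 0 t₂ (by simp)).mono_left nhdsWithin_le_nhds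
        · filter_upwards [self_mem_nhdsWithin] with ε (hε : ε ∈ Ioi 0)
          simp only [mem_compl_iff, mem_singleton_iff]
          intro h
          have : ε = 0 := by linarith [h]
          exact absurd this (ne_of_gt hε)
      have hslope := (hasDerivAt_iff_tendsto_slope.1 (hH t₂)).comp hmap
      have hnorm : Tendsto (fun ε => ‖slope H t₂ (t₂-ε)‖) (nhdsWithin 0 (Ioi 0)) (nhds ‖H' t₂‖) :=
        hslope.norm
      have hHn : Tendsto (fun ε => ‖H (t₂-ε)‖) (nhdsWithin 0 (Ioi 0)) (nhds 0) := by
        have : Tendsto (fun ε : ℝ => ‖H (t₂-ε)‖) (nhds 0) (nhds ‖H t₂‖) := by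
          exact ((hHc.comp (continuous_const.sub continuous_id)).norm).tendsto' 0 _ (by simp)
        rw [h2, norm_zero] at this
        exact this.mono_left nhdsWithin_le_nhds
      have := hnorm.mul hHn
      rw [mul_zero] at this
      apply this.congr'
      filter_upwards [self_mem_nhdsWithin] with ε (hε : ε ∈ Ioi 0)
      have hεne : (ε:ℝ) ≠ 0 := ne_of_gt hε
      rw [slope_def_module]
      rw [h2, sub_zero]
      have : t₂ - ε - t₂ = -ε := by ring
      rw [this, norm_smul, norm_inv, Real.norm_eq_abs, abs_neg, abs_of_pos hε]
      field_simp
    have := (l1.sub l2).sub l3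
    simpa using this
  -- conclude 0 ≤ ∫ f
  have hints : 0 ≤ ∫ t in t₁..t₂, f t := by
    apply le_of_tendsto hlim
    filter_upwards [Ioo_mem_nhdsGT_of_mem (by constructor <;> [exact le_refl 0; positivity] :
      (0:ℝ) ∈ Ico 0 (L/2))] with ε hε
    exact key ε hε
  -- final rearrangement
  have hint1 : IntervalIntegrable (fun t => ‖H' t‖^2) MeasureTheory.volume t₁ t₂ :=
    (hH'.norm.pow 2).intervalIntegrable t₁ t₂
  have hint2 : IntervalIntegrable (fun t => ω^2 * ‖H t‖^2) MeasureTheory.volume t₁ t₂ :=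
    (continuous_const.mul (hHc.norm.pow 2)).intervalIntegrable t₁ t₂
  have := intervalIntegral.integral_sub hint1 hint2
  simp only [hf] at hints
  rw [this] at hints
  rw [intervalIntegral.integral_const_mul] at hints
  have heq : (Real.pi / (t₂ - t₁))^2 = ω^2 := by rw [hω, hL]
  rw [heq]
  linarith


section aux
variable {E : Type*} [NormedAddCommGroup E] [InnerProductSpace ℝ E]

-- Step A: nontrivial Jacobi field cannot vanish on an open interval
theorem jacobi_nonvanishing
    (R : ℝ → E →L[ℝ] E) (hRcont : Continuous R)
    (J J' : ℝ → E)
    (hJ : ∀ t, HasDerivAt J (J' t) t)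
    (hJ'' : ∀ t, HasDerivAt J' (-(R t (J t))) t)
    (hJne : ∃ s, J s ≠ 0)
    (t₁ t₂ : ℝ) (ht : t₁ < t₂) :
    ∃ t₀ ∈ Ioo t₁ t₂, J t₀ ≠ 0 := by
  by_contra hcon
  push_neg at hcon
  obtain ⟨s, hs⟩ := hJne
  set t₀ : ℝ := (t₁ + t₂)/2 with ht₀
  have ht₀mem : t₀ ∈ Ioo t₁ t₂ := ⟨by simp only [ht₀]; linarith, by simp only [ht₀]; linarith⟩
  -- J' vanishes at t₀ as well
  have hJ't₀ : J' t₀ = 0 := by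
    have hev : J =ᶠ[nhds t₀] (fun _ => (0:E)) := by
      filter_upwards [isOpen_Ioo.mem_nhds ht₀mem] with u hu
      exact hcon u hu
    have h0 : HasDerivAt J 0 t₀ :=
      (hasDerivAt_const t₀ (0:E)).congr_of_eventuallyEq hev
    exact (hJ t₀).unique h0
  -- set up the first-order system on a compact interval containing s and t₀
  set c : ℝ := min s t₁ with hc
  set d : ℝ := max s t₂ with hd
  have hct₁ : c ≤ t₁ := min_le_right s t₁
  have ht₂d : t₂ ≤ d := le_max_right s t₂
  have hcd : c ≤ d := by linarith
  have ht₀cd : t₀ ∈ Ioo c d :=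
    ⟨lt_of_le_of_lt hct₁ ht₀mem.1, lt_of_lt_of_le ht₀mem.2 ht₂d⟩
  have hscd : s ∈ Icc c d := ⟨min_le_left s t₁, le_max_left s t₂⟩
  -- clamp function
  set π₀ : ℝ → ℝ := fun t => max c (min t d) with hπ₀
  have hπ₀mem : ∀ t, π₀ t ∈ Icc c d := fun t =>
    ⟨le_max_left _ _, max_le hcd (min_le_right t d)⟩
  have hπ₀eq : ∀ t ∈ Icc c d, π₀ t = t := by
    intro t htm
    simp only [hπ₀]
    rw [min_eq_left htm.2, max_eq_right htm.1]
  -- bound on ‖R‖ on [c,d]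
  obtain ⟨C, hC⟩ : ∃ C, ∀ t ∈ Icc c d, ‖R t‖ ≤ C := by
    obtain ⟨C, hC⟩ := (isCompact_Icc (a := c) (b := d)).exists_bound_of_continuousOn
      (hRcont.norm.continuousOn)
    exact ⟨C, fun t htm => le_trans (le_abs_self _) (hC t htm)⟩
  set Cl : ℝ := max C 1 with hCl
  have hCl1 : 1 ≤ Cl := le_max_right C 1
  have hClR : ∀ t, ‖R (π₀ t)‖ ≤ Cl := fun t =>
    le_trans (hC _ (hπ₀mem t)) (le_max_left C 1)
  -- the vector field
  set v : ℝ → E × E → E × E := fun t p => (p.2, -(R (π₀ t) p.1)) with hv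
  have hlip : ∀ t, LipschitzWith (Real.toNNReal Cl) (v t) := by
    intro t
    apply LipschitzWith.of_dist_le_mul
    intro p q
    rw [Real.coe_toNNReal _ (by linarith)]
    rw [Prod.dist_eq]
    apply max_le
    · calc dist p.2 q.2 ≤ dist p q := le_max_right _ _
        _ ≤ Cl * dist p q := le_mul_of_one_le_left dist_nonneg hCl1
    · rw [dist_eq_norm]
      have : -(R (π₀ t)) p.1 - -(R (π₀ t)) q.1 = -(R (π₀ t) (p.1 - q.1)) := by
        simp [map_sub]; abel
      rw [this, norm_neg]
      calc ‖R (π₀ t) (p.1 - q.1)‖ ≤ ‖R (π₀ t)‖ * ‖p.1 - q.1‖ :=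
            (R (π₀ t)).le_opNorm _
        _ ≤ Cl * ‖p.1 - q.1‖ := by
            apply mul_le_mul_of_nonneg_right (hClR t) (norm_nonneg _)
        _ = Cl * dist p.1 q.1 := by rw [dist_eq_norm]
        _ ≤ Cl * dist p q := by
            apply mul_le_mul_of_nonneg_left (le_max_left _ _) (by linarith)
  -- the two solutions
  set f : ℝ → E × E := fun t => (J t, J' t) with hfdef
  have hf' : ∀ t ∈ Ioo c d, HasDerivAt f (v t (f t)) t := by
    intro t htm
    have h := (hJ t).prodMk (hJ'' t)
    have : v t (f t) = (J' t, -(R t (J t))) := by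
      simp only [hv, hfdef, hπ₀eq t (Ioo_subset_Icc_self htm)]
    rw [this]
    exact h
  have hg' : ∀ t ∈ Ioo c d, HasDerivAt (fun _ : ℝ => ((0:E),(0:E)))
      (v t ((0:E),(0:E))) t := by
    intro t htm
    have : v t ((0:E),(0:E)) = ((0:E),(0:E)) := by simp [hv]
    rw [this]
    exact hasDerivAt_const t _
  have heq : EqOn f (fun _ : ℝ => ((0:E),(0:E))) (Icc c d) := by
    apply ODE_solution_unique_of_mem_Icc (s := fun _ => (univ : Set (E × E)))
      (fun t _ => (hlip t).lipschitzOnWith) ht₀cd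
    · exact Continuous.continuousOn (by
        exact ((continuous_iff_continuousAt.2 fun u => (hJ u).continuousAt).prodMk
          (continuous_iff_continuousAt.2 fun u => (hJ'' u).continuousAt)))
    · exact hf'
    · exact fun _ _ => mem_univ _
    · exact continuousOn_const
    · exact hg'
    · exact fun _ _ => mem_univ _
    · simp only [hfdef, hcon t₀ ht₀mem, hJ't₀]
  have := heq hscd
  simp only [hfdef, Prod.mk_eq_zero] at this
  exact hs (by simpa using congrArg Prod.fst this)

end aux


set_option maxHeartbeats 1000000 in
/-- **Weighted conjugate radius estimate along a geodesic** (analytic form).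
Under the strongly weighted curvature upper bound `K > 0`, any two zeros of a
nontrivial Jacobi field `J` (solution of `J'' = -R J`) are at distance at least
`(u_min/u_max) · π/√K`, where `u_min`, `u_max` are the extrema of `e^F` on the
interval between the zeros and `F' = a`. -/
theorem weighted_conjugate_radius
    {E : Type*} [NormedAddCommGroup E] [InnerProductSpace ℝ E]
    (a a' : ℝ → ℝ) (ha : ∀ t, HasDerivAt a (a' t) t)
    (K : ℝ) (hK : 0 < K)
    (R : ℝ → E →L[ℝ] E) (hRcont : Continuous R)
    (hRsa : ∀ t (v w : E), ⟪R t v, w⟫ = ⟪v, R t w⟫)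
    (hcurv : ∀ t (v : E), ⟪R t v, v⟫ + (a' t + (a t) ^ 2) * ‖v‖ ^ 2 ≤ K * ‖v‖ ^ 2)
    (J J' : ℝ → E)
    (hJ : ∀ t, HasDerivAt J (J' t) t)
    (hJ'' : ∀ t, HasDerivAt J' (-(R t (J t))) t)
    (hJne : ∃ s, J s ≠ 0)
    (t₁ t₂ : ℝ) (ht : t₁ < t₂) (hz₁ : J t₁ = 0) (hz₂ : J t₂ = 0)
    (F : ℝ → ℝ) (hF : ∀ t, HasDerivAt F (a t) t)
    (umin umax : ℝ)
    (humin : umin = sInf ((fun t => Real.exp (F t)) '' Set.Icc t₁ t₂))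
    (humax : umax = sSup ((fun t => Real.exp (F t)) '' Set.Icc t₁ t₂)) :
    umin / umax * (Real.pi / Real.sqrt K) ≤ t₂ - t₁ := by
  -- basic continuity
  have haC : Continuous a := continuous_iff_continuousAt.2 fun t => (ha t).continuousAt
  have hJC : Continuous J := continuous_iff_continuousAt.2 fun t => (hJ t).continuousAt
  have hJ'C : Continuous J' := continuous_iff_continuousAt.2 fun t => (hJ'' t).continuousAt
  have hFC : Continuous F := continuous_iff_continuousAt.2 fun t => (hF t).continuousAt
  -- umin / umax facts
  have hScomp : IsCompact ((fun t => Real.exp (F t)) '' Icc t₁ t₂) :=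
    isCompact_Icc.image (Real.continuous_exp.comp hFC)
  have hSne : ((fun t => Real.exp (F t)) '' Icc t₁ t₂).Nonempty :=
    ⟨_, mem_image_of_mem _ (left_mem_Icc.2 ht.le)⟩
  have huminpos : 0 < umin := by
    rw [humin]
    obtain ⟨x, hx, hxe⟩ := hScomp.sInf_mem hSne
    rw [← hxe]
    exact Real.exp_pos _
  have huminle : ∀ t ∈ Icc t₁ t₂, umin ≤ Real.exp (F t) := by
    intro t htm
    rw [humin]
    exact csInf_le hScomp.bddBelow (mem_image_of_mem _ htm)
  have humaxge : ∀ t ∈ Icc t₁ t₂, Real.exp (F t) ≤ umax := by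
    intro t htm
    rw [humax]
    exact le_csSup hScomp.bddAbove (mem_image_of_mem _ htm)
  have humaxpos : 0 < umax :=
    lt_of_lt_of_le huminpos (le_trans (huminle t₁ (left_mem_Icc.2 ht.le))
      (humaxge t₁ (left_mem_Icc.2 ht.le)))
  -- derivative of ‖J‖²
  have hnder : ∀ θ, HasDerivAt (fun x => ‖J x‖^2) (2 * ⟪J θ, J' θ⟫) θ := by
    intro θ
    have h := (hJ θ).inner ℝ (hJ θ)
    have he : (fun x => ⟪J x, J x⟫) = fun x => ‖J x‖^2 := by
      funext x; exact real_inner_self_eq_norm_sq (J x)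
    rw [he] at h
    refine h.congr_deriv ?_
    rw [real_inner_comm]; ring
  -- the energy function G and its derivative bound
  set G : ℝ → ℝ := fun t => ⟪J t, J' t⟫ - a t * ‖J t‖^2 with hGdef
  set gd : ℝ → ℝ := fun t => (⟪J t, -(R t (J t))⟫ + ⟪J' t, J' t⟫)
    - (a' t * ‖J t‖^2 + a t * (2 * ⟪J t, J' t⟫)) with hgddef
  have hGder : ∀ t, HasDerivAt G (gd t) t := by
    intro t
    exact ((hJ t).inner ℝ (hJ'' t)).sub ((ha t).mul (hnder t))
  set h : ℝ → ℝ := fun t => ‖J' t - a t • J t‖^2 - K * ‖J t‖^2 with hhdef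
  have hhC : Continuous h := by fun_prop
  have hexp : ∀ t, ‖J' t - a t • J t‖^2
      = ‖J' t‖^2 - 2 * (a t * ⟪J t, J' t⟫) + (a t)^2 * ‖J t‖^2 := by
    intro t
    rw [norm_sub_sq_real, real_inner_smul_right, norm_smul]
    rw [real_inner_comm]
    simp [mul_pow, sq_abs]
    try ring
  have hgh : ∀ t, h t ≤ gd t := by
    intro t
    have hc := hcurv t (J t)
    have h1 : ⟪J t, -(R t (J t))⟫ = -⟪R t (J t), J t⟫ := by
      rw [inner_neg_right, real_inner_comm]
    have h2 : ⟪J' t, J' t⟫ = ‖J' t‖^2 := real_inner_self_eq_norm_sq _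
    simp only [hhdef, hgddef, hexp t, h1, h2]
    nlinarith
  -- primitive of h
  have hprim : ∀ t, HasDerivAt (fun u => ∫ x in t₁..u, h x) (h t) t := by
    intro t
    exact (intervalIntegral.integral_hasStrictDerivAt_right
      (hhC.intervalIntegrable t₁ t)
      (hhC.stronglyMeasurableAtFilter volume (nhds t))
      (hhC.continuousAt)).hasDerivAt
  -- monotone D
  have hmono : Monotone (fun t => G t - ∫ x in t₁..t, h x) := by
    apply monotone_of_deriv_nonneg
    · intro t
      exact ((hGder t).sub (hprim t)).differentiableAt
    · intro t
      have hd : deriv (fun t => G t - ∫ x in t₁..t, h x) t = gd t - h t :=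
        ((hGder t).sub (hprim t)).deriv
      rw [hd]
      have := hgh t
      linarith
  have hG1 : G t₁ = 0 := by simp [hGdef, hz₁]
  have hG2 : G t₂ = 0 := by simp [hGdef, hz₂]
  have hinth : ∫ x in t₁..t₂, h x ≤ 0 := by
    have := hmono ht.le
    simp only [intervalIntegral.integral_same] at this
    rw [hG1, hG2] at this
    linarith
  -- the reweighted field H
  set H : ℝ → E := fun t => Real.exp (-F t) • J t with hHdef
  set H' : ℝ → E := fun t => Real.exp (-F t) • (J' t - a t • J t) with hH'def
  have hHder : ∀ t, HasDerivAt H (H' t) t := by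
    intro t
    have hed : HasDerivAt (fun u => Real.exp (-F u)) (Real.exp (-F t) * (-a t)) t :=
      (hF t).neg.exp
    have := hed.smul (hJ t)
    refine this.congr_deriv ?_
    simp only [hH'def]
    rw [smul_sub, smul_smul]
    module
  have hH'C : Continuous H' := by fun_prop
  have hHC : Continuous H := by fun_prop
  have hH1 : H t₁ = 0 := by simp [hHdef, hz₁]
  have hH2 : H t₂ = 0 := by simp [hHdef, hz₂]
  -- norm relations
  have hJnorm : ∀ t, ‖J t‖ = Real.exp (F t) * ‖H t‖ := by
    intro t
    simp only [hHdef]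
    rw [norm_smul, Real.norm_eq_abs, abs_of_pos (Real.exp_pos _), ← mul_assoc,
      ← Real.exp_add]
    simp
  have hJ'norm : ∀ t, ‖J' t - a t • J t‖ = Real.exp (F t) * ‖H' t‖ := by
    intro t
    simp only [hH'def]
    rw [norm_smul, Real.norm_eq_abs, abs_of_pos (Real.exp_pos _), ← mul_assoc,
      ← Real.exp_add]
    simp
  -- pointwise comparison on Icc
  have hptwise : ∀ t ∈ Icc t₁ t₂,
      umin^2 * ‖H' t‖^2 - K * umax^2 * ‖H t‖^2 ≤ h t := by
    intro t htm
    have e1 := huminle t htm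
    have e2 := humaxge t htm
    have hepos := Real.exp_pos (F t)
    simp only [hhdef]
    rw [hJ'norm t, hJnorm t]
    have n1 : (0:ℝ) ≤ ‖H' t‖ := norm_nonneg _
    have n2 : (0:ℝ) ≤ ‖H t‖ := norm_nonneg _
    have q1 : umin^2 * ‖H' t‖^2 ≤ (Real.exp (F t))^2 * ‖H' t‖^2 :=
      mul_le_mul_of_nonneg_right (by nlinarith) (by positivity)
    have q2 : (Real.exp (F t))^2 * ‖H t‖^2 ≤ umax^2 * ‖H t‖^2 :=
      mul_le_mul_of_nonneg_right (by nlinarith) (by positivity)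
    nlinarith
  -- integrate the comparison
  have hintH' : IntervalIntegrable (fun t => ‖H' t‖^2) volume t₁ t₂ :=
    (hH'C.norm.pow 2).intervalIntegrable t₁ t₂
  have hintH : IntervalIntegrable (fun t => ‖H t‖^2) volume t₁ t₂ :=
    (hHC.norm.pow 2).intervalIntegrable t₁ t₂
  have hmain : umin^2 * ∫ t in t₁..t₂, ‖H' t‖^2
      ≤ K * umax^2 * ∫ t in t₁..t₂, ‖H t‖^2 := by
    have hint1 : IntervalIntegrable (fun t => umin^2 * ‖H' t‖^2 - K * umax^2 * ‖H t‖^2)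
        volume t₁ t₂ :=
      ((continuous_const.mul (hH'C.norm.pow 2)).sub
        (continuous_const.mul (hHC.norm.pow 2))).intervalIntegrable t₁ t₂
    have hle : ∫ t in t₁..t₂, (umin^2 * ‖H' t‖^2 - K * umax^2 * ‖H t‖^2)
        ≤ ∫ t in t₁..t₂, h t := by
      apply intervalIntegral.integral_mono_on ht.le hint1 (hhC.intervalIntegrable t₁ t₂)
      exact hptwise
    rw [intervalIntegral.integral_sub (f := fun t => umin^2 * ‖H' t‖^2) (g := fun t => K * umax^2 * ‖H t‖^2) ((continuous_const.mul (hH'C.norm.pow 2)).intervalIntegrable t₁ t₂)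
      ((continuous_const.mul (hHC.norm.pow 2)).intervalIntegrable t₁ t₂)] at hle
    rw [intervalIntegral.integral_const_mul, intervalIntegral.integral_const_mul] at hle
    linarith
  -- Wirtinger inequality
  have hwirt := wirtinger_aux H H' hHder hH'C t₁ t₂ ht hH1 hH2
  -- positivity of ∫ ‖H‖²
  obtain ⟨t₀, ht₀, hJt₀⟩ := jacobi_nonvanishing R hRcont J J' hJ hJ'' hJne t₁ t₂ ht
  have hIpos : 0 < ∫ t in t₁..t₂, ‖H t‖^2 := by
    rw [intervalIntegral.integral_pos_iff_support_of_nonneg_ae'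
      (Filter.Eventually.of_forall (fun x => by positivity)) hintH]
    refine ⟨ht, ?_⟩
    have hU : IsOpen (Ioo t₁ t₂ ∩ (fun t => ‖H t‖^2) ⁻¹' (Ioi 0)) :=
      isOpen_Ioo.inter (((hHC.norm.pow 2)).isOpen_preimage _ isOpen_Ioi)
    have hUne : (Ioo t₁ t₂ ∩ (fun t => ‖H t‖^2) ⁻¹' (Ioi 0)).Nonempty := by
      refine ⟨t₀, ht₀, ?_⟩
      simp only [mem_preimage, mem_Ioi, hHdef]
      have : Real.exp (-F t₀) • J t₀ ≠ 0 :=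
        smul_ne_zero (ne_of_gt (Real.exp_pos _)) hJt₀
      exact pow_pos (norm_pos_iff.2 this) 2
    have hsub : (Ioo t₁ t₂ ∩ (fun t => ‖H t‖^2) ⁻¹' (Ioi 0))
        ⊆ Function.support (fun t => ‖H t‖^2) ∩ Ioc t₁ t₂ := by
      rintro x ⟨hx1, hx2⟩
      exact ⟨ne_of_gt hx2, ⟨hx1.1, hx1.2.le⟩⟩
    calc (0:ENNReal) < volume (Ioo t₁ t₂ ∩ (fun t => ‖H t‖^2) ⁻¹' (Ioi 0)) :=
          hU.measure_pos volume hUne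
      _ ≤ _ := measure_mono hsub
  -- final algebra
  set L : ℝ := t₂ - t₁ with hLdef
  have hLpos : 0 < L := by simp only [hLdef]; linarith
  have hratio : umin^2 * (Real.pi / L)^2 ≤ K * umax^2 := by
    have c1 : umin^2 * ((Real.pi / L)^2 * ∫ t in t₁..t₂, ‖H t‖^2)
        ≤ umin^2 * ∫ t in t₁..t₂, ‖H' t‖^2 := by
      apply mul_le_mul_of_nonneg_left _ (by positivity)
      exact hwirt
    have c2 := le_trans c1 hmain
    have := (mul_le_mul_iff_of_pos_right hIpos).1 (by
      calc umin^2 * (Real.pi/L)^2 * ∫ t in t₁..t₂, ‖H t‖^2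
          = umin^2 * ((Real.pi/L)^2 * ∫ t in t₁..t₂, ‖H t‖^2) := by ring
        _ ≤ K * umax^2 * ∫ t in t₁..t₂, ‖H t‖^2 := c2)
    exact this
  have hsqK : 0 < Real.sqrt K := Real.sqrt_pos.2 hK
  have hsqKsq : Real.sqrt K ^ 2 = K := Real.sq_sqrt hK.le
  rw [div_mul_div_comm, div_le_iff₀ (mul_pos humaxpos hsqK)]
  -- goal : umin * π ≤ L * (umax * √K)
  have hsq : (umin * Real.pi)^2 ≤ (L * (umax * Real.sqrt K))^2 := by
    have hL2 : (Real.pi / L)^2 = Real.pi^2 / L^2 := by rw [div_pow]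
    rw [hL2] at hratio
    have hLne : L^2 ≠ 0 := by positivity
    have := mul_le_mul_of_nonneg_right hratio (le_of_lt (by positivity : (0:ℝ) < L^2))
    calc (umin * Real.pi)^2 = umin^2 * (Real.pi^2/L^2) * L^2 := by field_simp
      _ ≤ K * umax^2 * L^2 := this
      _ = (L * (umax * Real.sqrt K))^2 := by rw [mul_pow, mul_pow, hsqKsq]; ring
  have h1 : 0 ≤ umin * Real.pi := by positivity
  have h2 : 0 ≤ L * (umax * Real.sqrt K) := by positivity
  calc umin * Real.pi = Real.sqrt ((umin * Real.pi)^2) := (Real.sqrt_sq h1).symm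
    _ ≤ Real.sqrt ((L * (umax * Real.sqrt K))^2) := Real.sqrt_le_sqrt hsq
    _ = L * (umax * Real.sqrt K) := Real.sqrt_sq h2
end

section
/- Upper Riccati comparison lemma with variable coefficient (used in the proofs of Theorem 1.5 and Lemma 7.1): Let k > 0, T > 0, and 0 < v_min ≤ v_max, and let v : (0,T) → ℝ satisfy v_min ≤ v(t) ≤ v_max for all t ∈ (0,T). Suppose λ : (0,T) → ℝ is differentiable with λ'(t) ≤ −λ(t)²/v(t)² − k·v(t)² for all t ∈ (0,T). Then λ(t) ≤ v_min·v_max·√k·cot((v_min·√k/v_max)·t) for all t ∈ (0, min(T, (v_max/v_min)·(π/√k))). -/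
/-- **Upper Riccati comparison lemma with variable coefficient.** If
`λ' ≤ -λ²/v² - k v²` with `v_min ≤ v ≤ v_max` on `(0, T)`, then
`λ t ≤ v_min v_max √k · cot((v_min √k / v_max) t)` on
`(0, min T ((v_max/v_min)·π/√k))`. -/
theorem upper_riccati_comparison
    (k T vmin vmax : ℝ) (hk : 0 < k) (hT : 0 < T)
    (hvmin : 0 < vmin) (hvv : vmin ≤ vmax)
    (v : ℝ → ℝ) (hv : ∀ t ∈ Set.Ioo (0 : ℝ) T, vmin ≤ v t ∧ v t ≤ vmax)
    (lam lam' : ℝ → ℝ)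
    (hlam : ∀ t ∈ Set.Ioo (0 : ℝ) T, HasDerivAt lam (lam' t) t)
    (hineq : ∀ t ∈ Set.Ioo (0 : ℝ) T,
      lam' t ≤ -(lam t) ^ 2 / (v t) ^ 2 - k * (v t) ^ 2) :
    ∀ t ∈ Set.Ioo (0 : ℝ) (min T (vmax / vmin * (Real.pi / Real.sqrt k))),
      lam t ≤ vmin * vmax * Real.sqrt k * Real.cot (vmin * Real.sqrt k / vmax * t) := by
  have hvmax : 0 < vmax := lt_of_lt_of_le hvmin hvv
  have hsk : 0 < Real.sqrt k := Real.sqrt_pos.mpr hk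
  have hsk2 : Real.sqrt k * Real.sqrt k = k := Real.mul_self_sqrt hk.le
  set c : ℝ := vmin * vmax * Real.sqrt k with hc_def
  set a : ℝ := vmin * Real.sqrt k / vmax with ha_def
  have hc : 0 < c := by positivity
  have ha : 0 < a := by positivity
  -- cot x = tan (π/2 - x)
  have hcot : ∀ x : ℝ, Real.cot x = Real.tan (Real.pi / 2 - x) := by
    intro x
    rw [Real.tan_pi_div_two_sub, Real.cot_eq_cos_div_sin, Real.tan_eq_sin_div_cos, inv_div]
  -- the angle function
  set θ : ℝ → ℝ := fun t => Real.pi / 2 - Real.arctan (lam t / c) with hθ_def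
  set θ' : ℝ → ℝ := fun t => -(1 / (1 + (lam t / c) ^ 2) * (lam' t / c)) with hθ'_def
  have hθd : ∀ t ∈ Set.Ioo (0 : ℝ) T, HasDerivAt θ (θ' t) t := by
    intro t ht
    have h1 : HasDerivAt (fun t => Real.arctan (lam t / c))
        (1 / (1 + (lam t / c) ^ 2) * (lam' t / c)) t :=
      ((hlam t ht).div_const c).arctan
    exact h1.const_sub (Real.pi / 2)
  -- derivative lower bound
  have hθ'a : ∀ t ∈ Set.Ioo (0 : ℝ) T, a ≤ θ' t := by
    intro t ht
    obtain ⟨hv1, hv2⟩ := hv t ht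
    have hvt : 0 < v t := lt_of_lt_of_le hvmin hv1
    have key : lam' t ≤ -(lam t) ^ 2 / vmax ^ 2 - k * vmin ^ 2 := by
      have h1 : (lam t) ^ 2 / vmax ^ 2 ≤ (lam t) ^ 2 / (v t) ^ 2 :=
        div_le_div_of_nonneg_left (sq_nonneg _) (by positivity) (by nlinarith)
      have hvv2 : vmin ^ 2 ≤ (v t) ^ 2 := by nlinarith
      have h2 : k * vmin ^ 2 ≤ k * (v t) ^ 2 :=
        mul_le_mul_of_nonneg_left hvv2 hk.le
      have := hineq t ht
      rw [neg_div] at this ⊢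
      linarith
    have hx : (0:ℝ) < 1 + (lam t / c) ^ 2 := by positivity
    have eac : a * c = k * vmin ^ 2 := by
      rw [ha_def, hc_def]
      field_simp
      linear_combination hsk2
    have elc : a * ((lam t) ^ 2 / c) = (lam t) ^ 2 / vmax ^ 2 := by
      rw [ha_def, hc_def]
      field_simp
    have eq1 : a * (c * (1 + (lam t / c) ^ 2)) = k * vmin ^ 2 + (lam t) ^ 2 / vmax ^ 2 := by
      have expand : a * (c * (1 + (lam t / c) ^ 2)) = a * c + a * ((lam t) ^ 2 / c) := by
        field_simp
      rw [expand, eac, elc]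
    have h3 : a * (c * (1 + (lam t / c) ^ 2)) ≤ -(lam' t) := by
      rw [eq1]; rw [neg_div] at key; linarith
    have h4 : a ≤ -(lam' t) / (c * (1 + (lam t / c) ^ 2)) :=
      (le_div_iff₀ (by positivity)).mpr h3
    have h5 : -(lam' t) / (c * (1 + (lam t / c) ^ 2)) = θ' t := by
      rw [hθ'_def]
      field_simp
    rwa [h5] at h4
  -- θ is positive
  have hθpos : ∀ t, 0 < θ t := fun t => sub_pos.mpr (Real.arctan_lt_pi_div_two _)
  -- derivative of the comparison function
  have hg : ∀ x ∈ Set.Ioo (0:ℝ) T, HasDerivAt (fun t => θ t - a * t) (θ' x - a) x := by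
    intro x hx
    have h1 : HasDerivAt (fun y : ℝ => a * y) a x := by
      simpa using (hasDerivAt_id x).const_mul a
    exact (hθd x hx).sub h1
  clear_value θ θ'
  -- main argument
  intro t₀ ht₀
  obtain ⟨ht₀0, ht₀m⟩ := ht₀
  have ht₀T : t₀ < T := lt_of_lt_of_le ht₀m (min_le_left _ _)
  have hat₀ : a * t₀ < Real.pi := by
    have h1 : t₀ < vmax / vmin * (Real.pi / Real.sqrt k) :=
      lt_of_lt_of_le ht₀m (min_le_right _ _)
    have h2 : a * (vmax / vmin * (Real.pi / Real.sqrt k)) = Real.pi := by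
      rw [ha_def]; field_simp
    calc a * t₀ < a * (vmax / vmin * (Real.pi / Real.sqrt k)) :=
          mul_lt_mul_of_pos_left h1 ha
      _ = Real.pi := h2
  -- comparison on [s, t₀]
  have hcomp : ∀ s : ℝ, 0 < s → s < t₀ → a * t₀ - a * s < θ t₀ := by
    intro s hs0 hst₀
    have hsub : Set.Icc s t₀ ⊆ Set.Ioo 0 T := fun x hx =>
      ⟨lt_of_lt_of_le hs0 hx.1, lt_of_le_of_lt hx.2 ht₀T⟩
    have hmono : MonotoneOn (fun t => θ t - a * t) (Set.Icc s t₀) := by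
      apply monotoneOn_of_hasDerivWithinAt_nonneg (f' := fun t => θ' t - a)
        (convex_Icc s t₀)
      · exact fun x hx => (hg x (hsub hx)).continuousAt.continuousWithinAt
      · intro x hx
        rw [interior_Icc] at hx
        exact (hg x (hsub (Set.Ioo_subset_Icc_self hx))).hasDerivWithinAt
      · intro x hx
        rw [interior_Icc] at hx
        have := hθ'a x (hsub (Set.Ioo_subset_Icc_self hx))
        linarith
    have h5 := hmono (Set.left_mem_Icc.mpr hst₀.le) (Set.right_mem_Icc.mpr hst₀.le) hst₀.le
    have h6 := hθpos s
    simp only at h5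
    linarith
  -- take the limit s → 0
  have hθt₀ : a * t₀ ≤ θ t₀ := by
    by_contra h
    push_neg at h
    obtain ⟨s, hspos, hslt, h8⟩ :
        ∃ s : ℝ, 0 < s ∧ s < t₀ ∧ a * s ≤ (a * t₀ - θ t₀) / 2 := by
      refine ⟨min ((a * t₀ - θ t₀) / (2 * a)) (t₀ / 2), ?_, ?_, ?_⟩
      · exact lt_min (div_pos (by linarith) (by linarith)) (by linarith)
      · exact lt_of_le_of_lt (min_le_right _ _) (by linarith)
      · have hle : min ((a * t₀ - θ t₀) / (2 * a)) (t₀ / 2) ≤ (a * t₀ - θ t₀) / (2 * a) :=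
          min_le_left _ _
        calc a * min ((a * t₀ - θ t₀) / (2 * a)) (t₀ / 2)
            ≤ a * ((a * t₀ - θ t₀) / (2 * a)) := mul_le_mul_of_nonneg_left hle ha.le
          _ = (a * t₀ - θ t₀) / 2 := by field_simp
    have h7 := hcomp s hspos hslt
    nlinarith [h7, h8, h]
  -- convert back
  have harc : Real.arctan (lam t₀ / c) ≤ Real.pi / 2 - a * t₀ := by
    have : θ t₀ = Real.pi / 2 - Real.arctan (lam t₀ / c) := by rw [hθ_def]
    linarith [hθt₀, this ▸ hθt₀]
  have hmem1 : Real.arctan (lam t₀ / c) ∈ Set.Ioo (-(Real.pi/2)) (Real.pi/2) :=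
    ⟨Real.neg_pi_div_two_lt_arctan _, Real.arctan_lt_pi_div_two _⟩
  have hmem2 : Real.pi / 2 - a * t₀ ∈ Set.Ioo (-(Real.pi/2)) (Real.pi/2) := by
    constructor
    · linarith
    · have : 0 < a * t₀ := mul_pos ha ht₀0
      linarith
  have htan : lam t₀ / c ≤ Real.tan (Real.pi / 2 - a * t₀) := by
    have := Real.strictMonoOn_tan.monotoneOn hmem1 hmem2 harc
    rwa [Real.tan_arctan] at this
  have hfin : lam t₀ ≤ c * Real.tan (Real.pi / 2 - a * t₀) := by
    have h9 : c * (lam t₀ / c) = lam t₀ := by field_simp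
    nlinarith [mul_le_mul_of_nonneg_left htan hc.le]
  rw [hcot (a * t₀)]
  exact hfin
end

section
/- Maximal interval of existence for a Riccati differential inequality: Let k > 0 and let α < β be real numbers. Let v : (α, β) → ℝ satisfy 0 < v_min ≤ v(t) ≤ v_max for all t ∈ (α, β). If there exists a differentiable function λ : (α, β) → ℝ with λ'(t) ≤ −λ(t)²/v(t)² − k·v(t)² for all t ∈ (α, β), then β − α ≤ (v_max/v_min)·(π/√k). -/
/-- **Maximal interval of existence for a Riccati differential inequality.**
If a differentiable `λ` satisfies `λ' ≤ -λ²/v² - k v²` on `(α, β)` with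
`0 < v_min ≤ v ≤ v_max`, then `β - α ≤ (v_max/v_min) · π/√k`. -/
theorem riccati_inequality_max_interval
    (k : ℝ) (hk : 0 < k) (α β : ℝ) (hαβ : α < β)
    (v : ℝ → ℝ) (vmin vmax : ℝ) (hvmin : 0 < vmin)
    (hv : ∀ t ∈ Set.Ioo α β, vmin ≤ v t ∧ v t ≤ vmax)
    (lam lam' : ℝ → ℝ)
    (hlam : ∀ t ∈ Set.Ioo α β, HasDerivAt lam (lam' t) t)
    (hineq : ∀ t ∈ Set.Ioo α β,
      lam' t ≤ -(lam t) ^ 2 / (v t) ^ 2 - k * (v t) ^ 2) :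
    β - α ≤ vmax / vmin * (Real.pi / Real.sqrt k) := by
  have ht0 : (α + β) / 2 ∈ Set.Ioo α β := ⟨by linarith, by linarith⟩
  have hvmax : 0 < vmax :=
    lt_of_lt_of_le hvmin ((hv _ ht0).1.trans (hv _ ht0).2)
  set s := Real.sqrt k with hs
  have hspos : 0 < s := Real.sqrt_pos.mpr hk
  have hs2 : s ^ 2 = k := Real.sq_sqrt hk.le
  set c : ℝ := s * (vmin * vmax) with hcdef
  have hc : 0 < c := by positivity
  set m : ℝ := s * vmin / vmax with hmdef
  have hm : 0 < m := by positivity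
  set φ : ℝ → ℝ := fun t => Real.arctan (lam t / c) + m * t with hφdef
  -- derivative of φ on Ioo
  have hφ' : ∀ t ∈ Set.Ioo α β,
      HasDerivAt φ ((1 / (1 + (lam t / c) ^ 2)) * (lam' t / c) + m) t := by
    intro t ht
    have h1 : HasDerivAt (fun x => lam x / c) (lam' t / c) t := (hlam t ht).div_const c
    have h2 := (Real.hasDerivAt_arctan (lam t / c)).comp t h1
    have h3 : HasDerivAt (fun x : ℝ => m * x) m t := by
      simpa using (hasDerivAt_id t).const_mul m
    exact h2.add h3
  -- bound the derivative
  have hbound : ∀ t ∈ Set.Ioo α β,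
      (1 / (1 + (lam t / c) ^ 2)) * (lam' t / c) + m ≤ 0 := by
    intro t ht
    obtain ⟨hV1, hV2⟩ := hv t ht
    have hVpos : 0 < v t := lt_of_lt_of_le hvmin hV1
    set L := lam t
    have key : lam' t ≤ -(L ^ 2 + c ^ 2) / vmax ^ 2 := by
      have h1 : -(L ^ 2) / (v t) ^ 2 ≤ -(L ^ 2) / vmax ^ 2 := by
        have hsq : v t ^ 2 ≤ vmax ^ 2 := by nlinarith
        rw [div_le_div_iff₀ (by positivity) (by positivity)]
        nlinarith [mul_nonneg (sq_nonneg L) (sub_nonneg.mpr hsq)]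
      have h2 : -(k * (v t) ^ 2) ≤ -(k * vmin ^ 2) := by
        have hsq2 : vmin ^ 2 ≤ v t ^ 2 := by nlinarith
        nlinarith [mul_le_mul_of_nonneg_left hsq2 hk.le]
      have hc2 : c ^ 2 = k * vmin ^ 2 * vmax ^ 2 := by
        rw [hcdef]; ring_nf; rw [hs2]; ring
      have := hineq t ht
      have : lam' t ≤ -(L ^ 2) / vmax ^ 2 - k * vmin ^ 2 := by
        calc lam' t ≤ -(L ^ 2) / (v t) ^ 2 - k * (v t) ^ 2 := by
              simpa [neg_div] using this
          _ ≤ -(L ^ 2) / vmax ^ 2 - k * vmin ^ 2 := by linarith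
      calc lam' t ≤ -(L ^ 2) / vmax ^ 2 - k * vmin ^ 2 := this
        _ = -(L ^ 2 + c ^ 2) / vmax ^ 2 := by
            rw [hc2]; field_simp; ring
    have hden : 0 < 1 + (L / c) ^ 2 := by positivity
    have step : (1 / (1 + (L / c) ^ 2)) * (lam' t / c) ≤
        (1 / (1 + (L / c) ^ 2)) * ((-(L ^ 2 + c ^ 2) / vmax ^ 2) / c) := by
      apply mul_le_mul_of_nonneg_left _ (by positivity)
      exact (div_le_div_iff_of_pos_right hc).mpr key
    have heq : (1 / (1 + (L / c) ^ 2)) * ((-(L ^ 2 + c ^ 2) / vmax ^ 2) / c) = -m := by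
      rw [hmdef, hcdef]
      have h1 : vmin ≠ 0 := ne_of_gt hvmin
      have h2 : vmax ≠ 0 := ne_of_gt hvmax
      have h3 : s ≠ 0 := ne_of_gt hspos
      field_simp
      ring
    linarith [step.trans_eq heq]
  -- φ is antitone on Ioo α β
  have hanti : AntitoneOn φ (Set.Ioo α β) := by
    apply antitoneOn_of_hasDerivWithinAt_nonpos (convex_Ioo α β)
      (f' := fun t => (1 / (1 + (lam t / c) ^ 2)) * (lam' t / c) + m)
    · intro t ht
      exact (hφ' t ht).continuousAt.continuousWithinAt
    · intro t ht
      rw [interior_Ioo] at ht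
      exact (hφ' t ht).hasDerivWithinAt
    · intro t ht
      rw [interior_Ioo] at ht
      exact hbound t ht
  -- key length estimate
  have hlen : ∀ x ∈ Set.Ioo α β, ∀ y ∈ Set.Ioo α β, x ≤ y → y - x < Real.pi / m := by
    intro x hx y hy hxy
    have := hanti hx hy hxy
    have hax : Real.arctan (lam x / c) < Real.pi / 2 := Real.arctan_lt_pi_div_two _
    have hay : -(Real.pi / 2) < Real.arctan (lam y / c) := Real.neg_pi_div_two_lt_arctan _
    have hφineq : m * (y - x) < Real.pi := by
      have : Real.arctan (lam y / c) + m * y ≤ Real.arctan (lam x / c) + m * x := this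
      nlinarith
    rw [lt_div_iff₀ hm]; linarith [hφineq]
  -- conclude
  have hfin : β - α ≤ Real.pi / m := by
    by_contra h
    push_neg at h
    set δ := (β - α - Real.pi / m) / 3 with hδ
    have hδpos : 0 < δ := by
      have : 0 < β - α - Real.pi / m := by linarith
      positivity
    have hπm : 0 < Real.pi / m := by positivity
    have hx : α + δ ∈ Set.Ioo α β := ⟨by linarith, by
      have : δ < β - α := by rw [hδ]; linarith
      linarith⟩
    have hy : β - δ ∈ Set.Ioo α β := ⟨by
      have : δ < β - α := by rw [hδ]; linarith
      linarith, by linarith⟩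
    have hle : α + δ ≤ β - δ := by
      have : 2 * δ < β - α := by rw [hδ]; linarith
      linarith
    have := hlen _ hx _ hy hle
    rw [hδ] at this
    linarith
  have : Real.pi / m = vmax / vmin * (Real.pi / s) := by
    rw [hmdef]
    field_simp
  linarith [hfin.trans_eq this]
end

section
/- Weighted Bochner inequality along a geodesic (Lemma 6.1, analytic form): Let E be a real inner product space of finite dimension n − 1, with n ≥ 2. Let T > 0, let S : (0,T) → (E →L[ℝ] E) be differentiable with each S(t) self-adjoint, and let R : (0,T) → (E →L[ℝ] E) be continuous with each R(t) self-adjoint, satisfying the Riccati equation S'(t) = −S(t)∘S(t) − R(t) for all t ∈ (0,T). Let a : (0,T) → ℝ be differentiable, let F : (0,T) → ℝ satisfy F' = a, and set v = e^{F/(n−1)}. Define m(t) = trace(S(t)) − a(t) and ρ(t) = trace(R(t)) + a'(t) + a(t)²/(n−1). Then the function v²·m is differentiable and (v²·m)'(t) ≤ −v(t)²·m(t)²/(n−1) − v(t)²·ρ(t) for all t ∈ (0,T). -/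
open scoped RealInnerProductSpace


lemma trace_eq_sum_inner' {E : Type*} [NormedAddCommGroup E] [InnerProductSpace ℝ E]
    [FiniteDimensional ℝ E] (f : E →ₗ[ℝ] E) :
    LinearMap.trace ℝ E f = ∑ i, ⟪(stdOrthonormalBasis ℝ E) i, f ((stdOrthonormalBasis ℝ E) i)⟫ := by
  set b := stdOrthonormalBasis ℝ E
  rw [LinearMap.trace_eq_matrix_trace ℝ b.toBasis f, Matrix.trace]
  congr 1; ext i
  rw [Matrix.diag_apply, LinearMap.toMatrix_apply, b.coe_toBasis_repr_apply,
    b.repr_apply_apply, b.coe_toBasis]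

lemma trace_sq_le' {E : Type*} [NormedAddCommGroup E] [InnerProductSpace ℝ E]
    [FiniteDimensional ℝ E] (S : E →L[ℝ] E)
    (hsa : ∀ x y : E, ⟪S x, y⟫ = ⟪x, S y⟫) :
    (LinearMap.trace ℝ E (S : E →ₗ[ℝ] E)) ^ 2
      ≤ (Module.finrank ℝ E : ℝ) * LinearMap.trace ℝ E ((S ∘L S : E →L[ℝ] E) : E →ₗ[ℝ] E) := by
  set b := stdOrthonormalBasis ℝ E
  rw [trace_eq_sum_inner', trace_eq_sum_inner']
  have h1 : ∀ i, ⟪b i, (S ∘L S) (b i)⟫ = ‖S (b i)‖ ^ 2 := by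
    intro i
    have : ⟪b i, S (S (b i))⟫ = ⟪S (b i), S (b i)⟫ := (hsa (b i) (S (b i))).symm
    rw [ContinuousLinearMap.comp_apply, this, real_inner_self_eq_norm_sq]
  simp only [ContinuousLinearMap.coe_coe] at *
  rw [Finset.sum_congr rfl fun i _ => h1 i]
  have key : ∀ i, ⟪b i, S (b i)⟫ ^ 2 ≤ ‖S (b i)‖ ^ 2 := by
    intro i
    have h := abs_real_inner_le_norm (b i) (S (b i))
    rw [b.orthonormal.1 i, one_mul] at h
    nlinarith [abs_nonneg ⟪b i, S (b i)⟫, sq_abs ⟪b i, S (b i)⟫, norm_nonneg (S (b i))]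
  have cs := sq_sum_le_card_mul_sum_sq (s := (Finset.univ : Finset (Fin (Module.finrank ℝ E))))
    (f := fun i => ⟪b i, S (b i)⟫)
  rw [Finset.card_univ, Fintype.card_fin] at cs
  refine cs.trans ?_
  have : ∑ i, ⟪b i, S (b i)⟫ ^ 2 ≤ ∑ i, ‖S (b i)‖ ^ 2 := Finset.sum_le_sum fun i _ => key i
  have hn : (0:ℝ) ≤ (Module.finrank ℝ E : ℝ) := Nat.cast_nonneg _
  nlinarith

/-- **Weighted Bochner inequality along a geodesic** (Lemma 6.1, analytic form).
If `S' = -S∘S - R` (radial curvature / Riccati equation) on `(0,T)` with `S`, `R`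
self-adjoint on an `(n-1)`-dimensional inner product space, `F' = a`,
`v = e^{F/(n-1)}`, `m = trace S - a`, and `ρ = trace R + a' + a²/(n-1)`, then
`v² m` is differentiable with `(v² m)' ≤ -v² m²/(n-1) - v² ρ`. -/
theorem weighted_bochner_inequality
    {E : Type*} [NormedAddCommGroup E] [InnerProductSpace ℝ E]
    [FiniteDimensional ℝ E]
    (n : ℕ) (hn : 2 ≤ n) (hdim : Module.finrank ℝ E = n - 1)
    (T : ℝ) (hT : 0 < T)
    (S S' : ℝ → E →L[ℝ] E)
    (hS : ∀ t ∈ Set.Ioo (0 : ℝ) T, HasDerivAt S (S' t) t)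
    (hSsa : ∀ t ∈ Set.Ioo (0 : ℝ) T, ∀ x y : E, ⟪S t x, y⟫ = ⟪x, S t y⟫)
    (R : ℝ → E →L[ℝ] E) (hRcont : ContinuousOn R (Set.Ioo (0 : ℝ) T))
    (hRsa : ∀ t ∈ Set.Ioo (0 : ℝ) T, ∀ x y : E, ⟪R t x, y⟫ = ⟪x, R t y⟫)
    (hRic : ∀ t ∈ Set.Ioo (0 : ℝ) T, S' t = -(S t ∘L S t) - R t)
    (a a' : ℝ → ℝ) (ha : ∀ t ∈ Set.Ioo (0 : ℝ) T, HasDerivAt a (a' t) t)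
    (F : ℝ → ℝ) (hF : ∀ t ∈ Set.Ioo (0 : ℝ) T, HasDerivAt F (a t) t)
    (v : ℝ → ℝ) (hv : v = fun t => Real.exp (F t / ((n : ℝ) - 1)))
    (m : ℝ → ℝ) (hm : m = fun t => LinearMap.trace ℝ E (S t).toLinearMap - a t)
    (ρ : ℝ → ℝ)
    (hρ : ρ = fun t =>
      LinearMap.trace ℝ E (R t).toLinearMap + a' t + (a t) ^ 2 / ((n : ℝ) - 1)) :
    ∀ t ∈ Set.Ioo (0 : ℝ) T, ∃ d : ℝ,
      HasDerivAt (fun s => (v s) ^ 2 * m s) d t ∧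
        d ≤ -(v t) ^ 2 * (m t) ^ 2 / ((n : ℝ) - 1) - (v t) ^ 2 * ρ t := by
  intro t ht
  set c : ℝ := (n : ℝ) - 1 with hc_def
  have hc : (0 : ℝ) < c := by
    have : (2 : ℝ) ≤ (n : ℝ) := by exact_mod_cast hn
    linarith
  -- trace as a continuous linear functional
  set φ : (E →L[ℝ] E) →L[ℝ] ℝ :=
    LinearMap.toContinuousLinearMap
      ((LinearMap.trace ℝ E).comp (ContinuousLinearMap.coeLM ℝ)) with hφ_def
  have hφ : ∀ A : E →L[ℝ] E, φ A = LinearMap.trace ℝ E A.toLinearMap := fun A => rfl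
  -- derivative of trace of S
  have htr : HasDerivAt (fun s => φ (S s)) (φ (S' t)) t :=
    φ.hasFDerivAt.comp_hasDerivAt t (hS t ht)
  have hmd : HasDerivAt m (φ (S' t) - a' t) t := by
    rw [hm]
    have : (fun s => LinearMap.trace ℝ E (S s).toLinearMap - a s)
        = fun s => φ (S s) - a s := by funext s; rw [hφ]
    rw [this]
    exact htr.sub (ha t ht)
  have hvd : HasDerivAt v (Real.exp (F t / c) * (a t / c)) t := by
    rw [hv]
    exact ((hF t ht).div_const c).exp
  have hvt : v t = Real.exp (F t / c) := by rw [hv]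
  have hprod : HasDerivAt (fun s => (v s) ^ 2 * m s)
      ((2 * v t ^ 1 * (Real.exp (F t / c) * (a t / c))) * m t + v t ^ 2 * (φ (S' t) - a' t)) t :=
    (hvd.pow 2).mul hmd
  refine ⟨_, hprod, ?_⟩
  -- compute trace of S'
  set τ : ℝ := φ (S t) with hτ
  set σ : ℝ := φ (S t ∘L S t) with hσ
  set r : ℝ := φ (R t) with hr
  have htrS' : φ (S' t) = -σ - r := by rw [hRic t ht]; simp [hσ, hr]
  have key : τ ^ 2 ≤ c * σ := by
    have := trace_sq_le' (S t) (hSsa t ht)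
    have hcast : ((Module.finrank ℝ E : ℕ) : ℝ) = c := by
      rw [hdim, hc_def, Nat.cast_sub (by omega : 1 ≤ n)]; norm_num
    rw [hcast] at this
    simpa [hτ, hσ, hφ] using this
  have hv2 : 0 < v t ^ 2 := by rw [hvt]; positivity
  have hmt : m t = τ - a t := by rw [hm, hτ, hφ]
  have hρt : ρ t = r + a' t + (a t) ^ 2 / c := by rw [hρ, hr, hφ]
  rw [htrS', hmt, hρt, ← hvt]
  rw [← sub_nonneg]
  have heq : -v t ^ 2 * (τ - a t) ^ 2 / c - v t ^ 2 * (r + a' t + a t ^ 2 / c)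
      - (2 * v t ^ 1 * (v t * (a t / c)) * (τ - a t) + v t ^ 2 * (-σ - r - a' t))
      = v t ^ 2 * (c * σ - τ ^ 2) / c := by
    field_simp
    ring
  rw [heq]
  have : 0 ≤ c * σ - τ ^ 2 := by linarith
  positivity
end

section
/- Analytic core of the diameter estimate (Theorem 1.5): Let E be a real inner product space of finite dimension n − 1, with n ≥ 2, and let k > 0. Let T > 0, let S : (0,T) → (E →L[ℝ] E) be differentiable with each S(t) self-adjoint, and let R : (0,T) → (E →L[ℝ] E) be continuous with each R(t) self-adjoint, satisfying S'(t) = −S(t)∘S(t) − R(t) for all t ∈ (0,T). Let a : (0,T) → ℝ be differentiable, let F : (0,T) → ℝ satisfy F' = a, and set v = e^{F/(n−1)}. Assume that trace(R(t)) + a'(t) + a(t)²/(n−1) ≥ (n−1)·k for all t ∈ (0,T), and that there are constants 0 < v_min ≤ v_max with v_min ≤ v(t) ≤ v_max for all t ∈ (0,T). Then T ≤ (v_max/v_min)·(π/√k). -/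
open scoped RealInnerProductSpace

lemma trace_sq_le_of_selfAdjoint' {E : Type*} [NormedAddCommGroup E] [InnerProductSpace ℝ E]
    [FiniteDimensional ℝ E] (f : E →L[ℝ] E)
    (hf : ∀ x y : E, ⟪f x, y⟫ = ⟪x, f y⟫) :
    (LinearMap.trace ℝ E f.toLinearMap) ^ 2
      ≤ (Module.finrank ℝ E : ℝ) * LinearMap.trace ℝ E (f ∘L f).toLinearMap := by
  classical
  set b := stdOrthonormalBasis ℝ E with hb
  set M := LinearMap.toMatrix b.toBasis b.toBasis f.toLinearMap with hM
  have htr1 : LinearMap.trace ℝ E f.toLinearMap = Matrix.trace M :=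
    LinearMap.trace_eq_matrix_trace ℝ b.toBasis _
  have htr2 : LinearMap.trace ℝ E (f ∘L f).toLinearMap = Matrix.trace (M * M) := by
    rw [ContinuousLinearMap.toLinearMap_comp,
      LinearMap.trace_eq_matrix_trace ℝ b.toBasis,
      LinearMap.toMatrix_comp b.toBasis b.toBasis b.toBasis]
  have happ : ∀ i j, M i j = ⟪b i, f (b j)⟫ := by
    intro i j
    rw [hM, LinearMap.toMatrix_apply, OrthonormalBasis.coe_toBasis_repr_apply,
      OrthonormalBasis.repr_apply_apply]
    simp
  have hsym : ∀ i j, M i j = M j i := by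
    intro i j
    rw [happ, happ, ← hf (b i) (b j), real_inner_comm]
  rw [htr1, htr2]
  have hdiag : Matrix.trace M = ∑ i, M i i := rfl
  have hdiag2 : Matrix.trace (M * M) = ∑ i, ∑ j, M i j * M j i := by
    simp [Matrix.trace, Matrix.diag, Matrix.mul_apply]
  rw [hdiag, hdiag2]
  have h1 : (∑ i, M i i) ^ 2 ≤ (Fintype.card (Fin (Module.finrank ℝ E)) : ℝ) * ∑ i, (M i i) ^ 2 := by
    simpa using sq_sum_le_card_mul_sum_sq (s := Finset.univ) (f := fun i => M i i)
  have h2 : ∑ i, (M i i) ^ 2 ≤ ∑ i, ∑ j, M i j * M j i := by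
    apply Finset.sum_le_sum
    intro i _
    have : ∀ j, M i j * M j i = (M i j)^2 := fun j => by rw [hsym i j]; ring
    simp_rw [this]
    exact Finset.single_le_sum (f := fun j => (M i j)^2) (fun j _ => sq_nonneg _) (Finset.mem_univ i)
  calc (∑ i, M i i) ^ 2 ≤ (Fintype.card (Fin (Module.finrank ℝ E)) : ℝ) * ∑ i, (M i i) ^ 2 := h1
    _ ≤ (Module.finrank ℝ E : ℝ) * ∑ i, ∑ j, M i j * M j i := by
        simp only [Fintype.card_fin]
        exact mul_le_mul_of_nonneg_left h2 (by positivity)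
lemma riccati_comparison' (A B T : ℝ) (hA : 0 < A) (hB : 0 < B) (hT : 0 < T)
    (ψ ψ' : ℝ → ℝ) (hd : ∀ t ∈ Set.Ioo (0:ℝ) T, HasDerivAt ψ (ψ' t) t)
    (hle : ∀ t ∈ Set.Ioo (0:ℝ) T, ψ' t ≤ -(B + (ψ t)^2 / A)) :
    T ≤ Real.pi * Real.sqrt A / Real.sqrt B := by
  have hsA : 0 < Real.sqrt A := Real.sqrt_pos.2 hA
  have hsB : 0 < Real.sqrt B := Real.sqrt_pos.2 hB
  set c : ℝ := Real.sqrt B / Real.sqrt A with hcdef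
  set D : ℝ := Real.sqrt A * Real.sqrt B with hDdef
  have hc : 0 < c := div_pos hsB hsA
  have hD : 0 < D := mul_pos hsA hsB
  have hcD : c * D = B := by
    rw [hcdef, hDdef]
    field_simp
    linear_combination Real.sq_sqrt hB.le
  have hcA : c * A = D := by
    rw [hcdef, hDdef]
    field_simp
    linear_combination -(Real.sq_sqrt hA.le)
  have hcDA : c / D = 1 / A := by
    rw [← hcA]
    field_simp
  set θ : ℝ → ℝ := fun t => Real.arctan (ψ t / D) + c * t with hθdef
  have hθd : ∀ t ∈ Set.Ioo (0:ℝ) T,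
      HasDerivAt θ (1 / (1 + (ψ t / D)^2) * (ψ' t / D) + c) t := by
    intro t ht
    have h1 : HasDerivAt (fun s => Real.arctan (ψ s / D))
        (1 / (1 + (ψ t / D)^2) * (ψ' t / D)) t :=
      ((hd t ht).div_const D).arctan
    have h2 : HasDerivAt (fun s => c * s) c t := by
      simpa using (hasDerivAt_id t).const_mul c
    exact h1.add h2
  have hkey : ∀ t ∈ Set.Ioo (0:ℝ) T, 1 / (1 + (ψ t / D)^2) * (ψ' t / D) + c ≤ 0 := by
    intro t ht
    have hpos : (0:ℝ) < 1 + (ψ t / D)^2 := by positivity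
    have hident : B + (ψ t)^2 / A = c * (D * (1 + (ψ t / D)^2)) := by
      have e1 : c * (D * (1 + (ψ t / D)^2)) = c * D + (ψ t)^2 * (c / D) := by
        field_simp
      rw [e1, hcD, hcDA]
      ring
    have h4 : ψ' t ≤ -(c * (D * (1 + (ψ t / D)^2))) := by
      rw [← hident]; exact hle t ht
    have h5 : ψ' t / D ≤ -(c * (1 + (ψ t / D)^2)) := by
      rw [div_le_iff₀ hD]
      nlinarith [h4]
    have h6 : 1 / (1 + (ψ t / D)^2) * (ψ' t / D)
        ≤ 1 / (1 + (ψ t / D)^2) * (-(c * (1 + (ψ t / D)^2))) :=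
      mul_le_mul_of_nonneg_left h5 (by positivity)
    have h7 : 1 / (1 + (ψ t / D)^2) * (-(c * (1 + (ψ t / D)^2))) = -c := by
      field_simp
    linarith
  have hanti : AntitoneOn θ (Set.Ioo 0 T) := by
    apply antitoneOn_of_hasDerivWithinAt_nonpos (convex_Ioo 0 T)
      (f' := fun t => 1 / (1 + (ψ t / D)^2) * (ψ' t / D) + c)
    · intro t ht
      exact (hθd t ht).continuousAt.continuousWithinAt
    · intro t ht
      rw [isOpen_Ioo.interior_eq] at ht ⊢
      exact (hθd t ht).hasDerivWithinAt
    · intro t ht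
      rw [isOpen_Ioo.interior_eq] at ht
      exact hkey t ht
  by_contra hcon
  push_neg at hcon
  have hπc : Real.pi / c = Real.pi * Real.sqrt A / Real.sqrt B := by
    rw [hcdef, div_div_eq_mul_div]
  have hπT : Real.pi / c < T := by rw [hπc]; exact hcon
  have hπpos : 0 < Real.pi / c := div_pos Real.pi_pos hc
  set ε : ℝ := min ((T - Real.pi/c)/2) (T/3) with hεdef
  have hε0 : 0 < ε := lt_min (by linarith) (by linarith)
  have hεT : ε ≤ T/3 := min_le_right _ _
  have h1 : (ε : ℝ) ∈ Set.Ioo (0:ℝ) T := ⟨hε0, by linarith⟩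
  have h2 : (T - ε) ∈ Set.Ioo (0:ℝ) T := ⟨by linarith, by linarith⟩
  have hmono := hanti h1 h2 (by linarith)
  have b1 := Real.arctan_lt_pi_div_two (ψ ε / D)
  have b2 := Real.neg_pi_div_two_lt_arctan (ψ (T - ε) / D)
  have hlt : c * (T - 2*ε) < Real.pi := by
    simp only [hθdef] at hmono
    nlinarith [hmono]
  have hε2 : ε ≤ (T - Real.pi/c)/2 := min_le_left _ _
  have hge : Real.pi ≤ c * (T - 2*ε) := by
    have h8 : Real.pi / c ≤ T - 2*ε := by linarith
    calc Real.pi = c * (Real.pi / c) := by field_simp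
      _ ≤ c * (T - 2*ε) := mul_le_mul_of_nonneg_left h8 hc.le
  linarith


lemma key_alg' (c1 k vmin vmax V M α α' trS' trR trSS : ℝ)
    (hc1 : 0 < c1) (hk : 0 < k) (hvmin : 0 < vmin) (hvv : vmin ≤ vmax)
    (hV1 : vmin ≤ V) (hV2 : V ≤ vmax)
    (f1 : trS' = -trSS - trR)
    (f2 : (M + α)^2 ≤ c1 * trSS)
    (f3 : c1 * k ≤ trR + α' + α^2 / c1) :
    (2 * V ^ 1 * (V * (α / c1))) * M + V^2 * (trS' - α')
      ≤ -(c1 * k * vmin^2 + (V^2 * M)^2 / (c1 * vmax^2)) := by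
  have hV : 0 < V := lt_of_lt_of_le hvmin hV1
  have hvmax : 0 < vmax := lt_of_lt_of_le hvmin hvv
  have step2 : (M + α)^2 / c1 ≤ trSS := by
    rw [div_le_iff₀ hc1]
    nlinarith [f2]
  have step3 : trS' - α' ≤ -((M + α)^2) / c1 + α^2 / c1 - c1 * k := by
    rw [f1, neg_div]
    linarith [step2, f3]
  have step4 : (2 * V ^ 1 * (V * (α / c1))) * M + V^2 * (trS' - α')
      ≤ -(V^2 * M^2 / c1) - c1 * k * V^2 := by
    have h1 : V^2 * (trS' - α') ≤ V^2 * (-((M + α)^2) / c1 + α^2 / c1 - c1 * k) :=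
      mul_le_mul_of_nonneg_left step3 (sq_nonneg V)
    have h2 : (2 * V ^ 1 * (V * (α / c1))) * M
        + V^2 * (-((M + α)^2) / c1 + α^2 / c1 - c1 * k)
        = -(V^2 * M^2 / c1) - c1 * k * V^2 := by
      field_simp
      ring
    linarith
  have hVsq : V^2 ≤ vmax^2 := by nlinarith
  have hVsq' : vmin^2 ≤ V^2 := by nlinarith
  have e2 : (V^2 * M)^2 / (c1 * vmax^2) ≤ V^2 * M^2 / c1 := by
    rw [div_le_div_iff₀ (by positivity) hc1]
    nlinarith [mul_le_mul_of_nonneg_left hVsq (show (0:ℝ) ≤ c1 * (V^2 * M^2) by positivity)]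
  have e3 : c1 * k * vmin^2 ≤ c1 * k * V^2 :=
    mul_le_mul_of_nonneg_left hVsq' (by positivity)
  linarith

set_option maxHeartbeats 1000000 in
/-- **Analytic core of the diameter estimate** (Theorem 1.5). If `S' = -S∘S - R`
on `(0,T)` with `S`, `R` self-adjoint on an `(n-1)`-dimensional inner product
space, `F' = a`, `v = e^{F/(n-1)}` satisfies `0 < v_min ≤ v ≤ v_max`, and the
weighted Ricci lower bound `trace R + a' + a²/(n-1) ≥ (n-1)·k` holds with
`k > 0`, then `T ≤ (v_max/v_min) · π/√k`. -/
theorem diameter_estimate_core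
    {E : Type*} [NormedAddCommGroup E] [InnerProductSpace ℝ E]
    [FiniteDimensional ℝ E]
    (n : ℕ) (hn : 2 ≤ n) (hdim : Module.finrank ℝ E = n - 1)
    (k : ℝ) (hk : 0 < k)
    (T : ℝ) (hT : 0 < T)
    (S S' : ℝ → E →L[ℝ] E)
    (hS : ∀ t ∈ Set.Ioo (0 : ℝ) T, HasDerivAt S (S' t) t)
    (hSsa : ∀ t ∈ Set.Ioo (0 : ℝ) T, ∀ x y : E, ⟪S t x, y⟫ = ⟪x, S t y⟫)
    (R : ℝ → E →L[ℝ] E) (hRcont : ContinuousOn R (Set.Ioo (0 : ℝ) T))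
    (hRsa : ∀ t ∈ Set.Ioo (0 : ℝ) T, ∀ x y : E, ⟪R t x, y⟫ = ⟪x, R t y⟫)
    (hRic : ∀ t ∈ Set.Ioo (0 : ℝ) T, S' t = -(S t ∘L S t) - R t)
    (a a' : ℝ → ℝ) (ha : ∀ t ∈ Set.Ioo (0 : ℝ) T, HasDerivAt a (a' t) t)
    (F : ℝ → ℝ) (hF : ∀ t ∈ Set.Ioo (0 : ℝ) T, HasDerivAt F (a t) t)
    (v : ℝ → ℝ) (hv : v = fun t => Real.exp (F t / ((n : ℝ) - 1)))
    (hcurv : ∀ t ∈ Set.Ioo (0 : ℝ) T,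
      ((n : ℝ) - 1) * k ≤
        LinearMap.trace ℝ E (R t).toLinearMap + a' t + (a t) ^ 2 / ((n : ℝ) - 1))
    (vmin vmax : ℝ) (hvmin : 0 < vmin) (hvv : vmin ≤ vmax)
    (hvbound : ∀ t ∈ Set.Ioo (0 : ℝ) T, vmin ≤ v t ∧ v t ≤ vmax) :
    T ≤ vmax / vmin * (Real.pi / Real.sqrt k) := by
  have hc1 : (1:ℝ) ≤ (n:ℝ) - 1 := by
    have h2 : (2:ℝ) ≤ (n:ℝ) := by exact_mod_cast hn
    linarith
  set c1 : ℝ := (n:ℝ) - 1 with hc1def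
  have hc1pos : (0:ℝ) < c1 := lt_of_lt_of_le one_pos hc1
  -- the trace as a continuous linear functional
  set tr : (E →L[ℝ] E) →L[ℝ] ℝ :=
    LinearMap.toContinuousLinearMap
      ((LinearMap.trace ℝ E).comp (ContinuousLinearMap.coeLM ℝ)) with htrdef
  have htrapp : ∀ f : E →L[ℝ] E, tr f = LinearMap.trace ℝ E f.toLinearMap := by
    intro f; simp [htrdef]
  -- positivity of v
  have hvpos : ∀ t, 0 < v t := by intro t; rw [hv]; exact Real.exp_pos _
  -- derivative of v
  have hvd : ∀ t ∈ Set.Ioo (0:ℝ) T, HasDerivAt v (v t * (a t / c1)) t := by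
    intro t ht
    rw [hv]
    simpa using ((hF t ht).div_const c1).exp
  -- m and its derivative
  set m : ℝ → ℝ := fun t => tr (S t) - a t with hmdef
  have hmd : ∀ t ∈ Set.Ioo (0:ℝ) T, HasDerivAt m (tr (S' t) - a' t) t := by
    intro t ht
    have h1 : HasDerivAt (fun s => tr (S s)) (tr (S' t)) t :=
      (tr.hasFDerivAt.comp_hasDerivAt t (hS t ht))
    exact h1.sub (ha t ht)
  -- w = v^2 * m and its derivative
  set w : ℝ → ℝ := fun t => (v t)^2 * m t with hwdef
  set w' : ℝ → ℝ :=
    fun t => (2 * v t ^ 1 * (v t * (a t / c1))) * m t + (v t)^2 * (tr (S' t) - a' t) with hw'def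
  have hwd : ∀ t ∈ Set.Ioo (0:ℝ) T, HasDerivAt w (w' t) t := by
    intro t ht
    exact ((hvd t ht).pow 2).mul (hmd t ht)
  set A : ℝ := c1 * vmax^2 with hAdef
  set B : ℝ := c1 * k * vmin^2 with hBdef
  have hvmax : 0 < vmax := lt_of_lt_of_le hvmin hvv
  have hA : 0 < A := mul_pos hc1pos (pow_pos hvmax 2)
  have hB : 0 < B := mul_pos (mul_pos hc1pos hk) (pow_pos hvmin 2)
  -- key differential inequality
  have hkey : ∀ t ∈ Set.Ioo (0:ℝ) T, w' t ≤ -(B + (w t)^2 / A) := by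
    intro t ht
    have hvb := hvbound t ht
    -- trace identity from the Riccati equation
    have f1 : tr (S' t) = -(tr (S t ∘L S t)) - tr (R t) := by
      rw [hRic t ht, map_sub, map_neg]
    -- trS = m + a
    have f4 : tr (S t) = m t + a t := by simp only [hmdef]; ring
    -- Cauchy-Schwarz for the trace
    have f2 : (m t + a t)^2 ≤ c1 * tr (S t ∘L S t) := by
      rw [← f4, htrapp, htrapp]
      have hcast : ((Module.finrank ℝ E : ℝ)) = c1 := by
        rw [hdim, hc1def]
        have h11 : ((n - 1 : ℕ) : ℝ) = (n:ℝ) - 1 := by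
          have := Nat.cast_sub (by omega : 1 ≤ n) (R := ℝ)
          simpa using this
        rw [h11]
      rw [← hcast]
      exact trace_sq_le_of_selfAdjoint' (S t) (hSsa t ht)
    -- curvature bound
    have f3 : c1 * k ≤ tr (R t) + a' t + (a t)^2 / c1 := by
      rw [htrapp]
      exact hcurv t ht
    simp only [hw'def, hwdef, hBdef, hAdef]
    exact key_alg' c1 k vmin vmax (v t) (m t) (a t) (a' t) (tr (S' t)) (tr (R t))
      (tr (S t ∘L S t)) hc1pos hk hvmin hvv hvb.1 hvb.2 f1 f2 f3
  -- apply the Riccati comparison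
  have hTle : T ≤ Real.pi * Real.sqrt A / Real.sqrt B :=
    riccati_comparison' A B T hA hB hT w w' hwd hkey
  -- convert the bound
  have hconv : Real.pi * Real.sqrt A / Real.sqrt B = vmax / vmin * (Real.pi / Real.sqrt k) := by
    rw [hAdef, hBdef]
    have hvmax : 0 < vmax := lt_of_lt_of_le hvmin hvv
    have s1 : Real.sqrt (c1 * vmax^2) = Real.sqrt c1 * vmax := by
      rw [Real.sqrt_mul hc1pos.le, Real.sqrt_sq hvmax.le]
    have s2 : Real.sqrt (c1 * k * vmin^2) = Real.sqrt c1 * Real.sqrt k * vmin := by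
      rw [Real.sqrt_mul (by positivity), Real.sqrt_sq hvmin.le, Real.sqrt_mul hc1pos.le]
    rw [s1, s2]
    have hsc1 : 0 < Real.sqrt c1 := Real.sqrt_pos.2 hc1pos
    have hsk : 0 < Real.sqrt k := Real.sqrt_pos.2 hk
    field_simp
  rw [hconv] at hTle
  exact hTle
end

section
/- Sturm-type zero estimate for the weighted Jacobi ODE (core of Lemma 7.1): Let k > 0, let f : ℝ → ℝ be continuously differentiable, and suppose there are constants 0 < u_min ≤ u_max with u_min ≤ e^{f(t)} ≤ u_max for all t. Let ψ : ℝ → ℝ be twice differentiable with ψ''(t) + 2·f'(t)·ψ'(t) + k·ψ(t) = 0 for all t, ψ(0) = 0, and ψ'(0) = 1. Then there exists L with 0 < L ≤ (u_max/u_min)·(π/√k) and ψ(L) = 0. -/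
open Real Set Filter Topology

set_option maxHeartbeats 1000000 in
theorem key_zero
    (k : ℝ) (hk : 0 < k)
    (f f' : ℝ → ℝ) (hf : ∀ t, HasDerivAt f (f' t) t)
    (umin umax : ℝ) (humin : 0 < umin)
    (hu : ∀ t, umin ≤ Real.exp (f t) ∧ Real.exp (f t) ≤ umax)
    (ψ ψ' : ℝ → ℝ)
    (hψ : ∀ t, HasDerivAt ψ (ψ' t) t)
    (hψ'' : ∀ t, HasDerivAt ψ' (-(2 * f' t * ψ' t + k * ψ t)) t)
    (d : ℝ) (hd0 : 0 < d) (hdpos : ∀ t ∈ Set.Ioc (0:ℝ) d, 0 < ψ t)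
    (b : ℝ) (hbT : umax / umin * (Real.pi / Real.sqrt k) < b) :
    ∃ z, 0 < z ∧ z ≤ b ∧ ψ z = 0 := by
  classical
  set T := umax / umin * (Real.pi / Real.sqrt k) with hTdef
  have humax : umin ≤ umax := le_trans (hu 0).1 (hu 0).2
  have humaxpos : 0 < umax := lt_of_lt_of_le humin humax
  have hsk : 0 < Real.sqrt k := Real.sqrt_pos.mpr hk
  have hpi := Real.pi_pos
  have hTpos : 0 < T := by
    apply mul_pos (div_pos humaxpos humin) (div_pos hpi hsk)
  have hb0 : 0 < b := lt_trans hTpos hbT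
  set a := (b - T) / 2 with hadef
  have ha : 0 < a := by rw [hadef]; linarith
  have hTb0 : 0 < T + b := by linarith
  set μ := 2 * Real.pi / (T + b) with hμdef
  have hμ : 0 < μ := by positivity
  have hab : a + Real.pi / μ = b := by
    rw [hadef, hμdef]; field_simp; ring
  have hident : Real.sqrt k * umin * T = Real.pi * umax := by
    rw [hTdef]; field_simp
  have hAμ : umax ^ 2 * μ ^ 2 < k * umin ^ 2 := by
    have hq : 0 < Real.sqrt k * umin := mul_pos hsk humin
    have h1 : μ * umax < Real.sqrt k * umin := by
      rw [hμdef, div_mul_eq_mul_div, div_lt_iff₀ hTb0]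
      have e1 : Real.sqrt k * umin * (T + b) =
          Real.pi * umax + Real.sqrt k * umin * b := by
        rw [mul_add, hident]
      have e2 : Real.pi * umax < Real.sqrt k * umin * b := by
        calc Real.pi * umax = Real.sqrt k * umin * T := hident.symm
          _ < Real.sqrt k * umin * b := by
              exact mul_lt_mul_of_pos_left hbT hq
      rw [e1]; linarith
    have h2 : (μ * umax) ^ 2 < (Real.sqrt k * umin) ^ 2 :=
      pow_lt_pow_left₀ h1 (mul_pos hμ humaxpos).le two_ne_zero
    calc umax ^ 2 * μ ^ 2 = (μ * umax) ^ 2 := by ring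
      _ < (Real.sqrt k * umin) ^ 2 := h2
      _ = k * umin ^ 2 := by rw [mul_pow, Real.sq_sqrt hk.le]
  by_contra hcon
  push_neg at hcon
  -- ψ is positive on (0, b]
  have hcψ : Continuous ψ := by
    rw [continuous_iff_continuousAt]; exact fun t => (hψ t).continuousAt
  have hcψ' : Continuous ψ' := by
    rw [continuous_iff_continuousAt]; exact fun t => (hψ'' t).continuousAt
  have hd'0 : 0 < min d b := lt_min hd0 hb0
  have hψd' : 0 < ψ (min d b) := hdpos _ ⟨hd'0, min_le_left d b⟩
  have hpos : ∀ t ∈ Set.Ioc (0:ℝ) b, 0 < ψ t := by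
    intro t ht
    rcases le_or_gt t d with h | h
    · exact hdpos t ⟨ht.1, h⟩
    · rcases lt_trichotomy (ψ t) 0 with hneg | hzero | hposs
      · exfalso
        have hd't : min d b ≤ t := le_trans (min_le_left d b) h.le
        have h0mem : (0:ℝ) ∈ Set.Icc (ψ t) (ψ (min d b)) := ⟨hneg.le, hψd'.le⟩
        obtain ⟨c, hcmem, hc⟩ := intermediate_value_Icc' hd't hcψ.continuousOn h0mem
        exact hcon c (lt_of_lt_of_le hd'0 hcmem.1) (le_trans hcmem.2 ht.2) hc
      · exact absurd hzero (hcon t ht.1 ht.2)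
      · exact hposs
  -- the function E = e^{2f} and v = E ψ'
  set E : ℝ → ℝ := fun t => Real.exp (2 * f t) with hE
  have hEpos : ∀ t, 0 < E t := fun t => Real.exp_pos _
  have hEsq : ∀ t, E t = Real.exp (f t) ^ 2 := by
    intro t; rw [hE]; simp only []; rw [two_mul, Real.exp_add]; ring
  have hElow : ∀ t, umin ^ 2 ≤ E t := by
    intro t; rw [hEsq t]; exact pow_le_pow_left₀ humin.le (hu t).1 2
  have hEup : ∀ t, E t ≤ umax ^ 2 := by
    intro t; rw [hEsq t]
    exact pow_le_pow_left₀ (Real.exp_pos _).le (hu t).2 2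
  have hEderiv : ∀ t, HasDerivAt E (2 * f' t * E t) t := by
    intro t
    have h := ((hf t).const_mul 2).exp
    convert h using 1; ring
  set v : ℝ → ℝ := fun t => E t * ψ' t with hv
  have hvderiv : ∀ t, HasDerivAt v (-(k * E t * ψ t)) t := by
    intro t
    have h := (hEderiv t).mul (hψ'' t)
    refine h.congr_deriv ?_; ring
  have hcE : Continuous E := by
    rw [continuous_iff_continuousAt]; exact fun t => (hEderiv t).continuousAt
  have hcv : Continuous v := hcE.mul hcψ'
  set R : ℝ → ℝ := fun t => v t / ψ t with hR
  have hRderiv : ∀ t, ψ t ≠ 0 →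
      HasDerivAt R (-(k * E t) - R t ^ 2 / E t) t := by
    intro t ht
    have h := (hvderiv t).div (hψ t) ht
    refine h.congr_deriv ?_
    have hψ't : ψ' t = v t / E t := by
      rw [hv]; field_simp; exact (mul_div_cancel_right₀ _ (hEpos t).ne').symm
    rw [hR]
    simp only []
    rw [hψ't]
    field_simp
  -- the barrier B
  set A := umax ^ 2 with hA
  have hApos : 0 < A := by positivity
  set B : ℝ → ℝ := fun t => A * μ * (Real.cos (μ * (t - a)) / Real.sin (μ * (t - a))) with hB
  have hsinpos : ∀ t, a < t → t < b → 0 < Real.sin (μ * (t - a)) := by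
    intro t h1 h2
    apply Real.sin_pos_of_pos_of_lt_pi
    · exact mul_pos hμ (sub_pos.mpr h1)
    · have ht : t - a < Real.pi / μ := by
        rw [← hab] at h2; linarith
      calc μ * (t - a) < μ * (Real.pi / μ) := by
            exact mul_lt_mul_of_pos_left ht hμ
        _ = Real.pi := by field_simp
  have hBderiv : ∀ t, a < t → t < b →
      HasDerivAt B (-(A * μ ^ 2) - B t ^ 2 / A) t := by
    intro t h1 h2
    have hs := hsinpos t h1 h2
    have hinner : HasDerivAt (fun t => μ * (t - a)) μ t := by
      simpa using ((hasDerivAt_id t).sub_const a).const_mul μ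
    have hcos := hinner.cos
    have hsin := hinner.sin
    have hdiv := hcos.div hsin (ne_of_gt hs)
    have h := hdiv.const_mul (A * μ)
    refine h.congr_deriv ?_
    have hpy := Real.sin_sq_add_cos_sq (μ * (t - a))
    rw [hB]
    simp only []
    field_simp
  -- bound on R over [a, b]
  have hab' : a ≤ b := by rw [← hab]; linarith [div_pos hpi hμ]
  have hRcont : ContinuousOn R (Set.Icc a b) := by
    apply ContinuousOn.div hcv.continuousOn hcψ.continuousOn
    intro t ht
    exact ne_of_gt (hpos t ⟨lt_of_lt_of_le ha ht.1, ht.2⟩)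
  obtain ⟨C, hC⟩ := isCompact_Icc.exists_bound_of_continuousOn hRcont
  have hC0 : 0 ≤ C := le_trans (norm_nonneg _) (hC a ⟨le_refl a, hab'⟩)
  -- choose t₀ and t₁
  set θ := Real.arctan (A * μ / (C + 1)) with hθ
  have hθpos : 0 < θ := by
    rw [hθ, ← Real.arctan_zero]
    exact Real.arctan_strictMono (by positivity)
  have hθlt : θ < Real.pi / 2 := Real.arctan_lt_pi_div_two _
  set t₀ := a + θ / μ with ht₀def
  set t₁ := a + (Real.pi - θ) / μ with ht₁def
  have h_t₀a : a < t₀ := by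
    rw [ht₀def]; linarith [div_pos hθpos hμ]
  have h_t01 : t₀ < t₁ := by
    rw [ht₀def, ht₁def]
    have : θ / μ < (Real.pi - θ) / μ := by
      apply div_lt_div_of_pos_right (by linarith) hμ
    linarith
  have h_t₁b : t₁ < b := by
    rw [← hab, ht₁def]
    have : (Real.pi - θ) / μ < Real.pi / μ := by
      apply div_lt_div_of_pos_right (by linarith) hμ
    linarith
  have hμt₀ : μ * (t₀ - a) = θ := by
    rw [ht₀def]; field_simp; ring
  have hμt₁ : μ * (t₁ - a) = Real.pi - θ := by
    rw [ht₁def]; field_simp; ring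
  have htan : Real.tan θ = A * μ / (C + 1) := Real.tan_arctan _
  have hcθ : 0 < Real.cos θ :=
    Real.cos_pos_of_mem_Ioo ⟨by linarith [Real.pi_div_two_pos], hθlt⟩
  have hsθ : 0 < Real.sin θ :=
    Real.sin_pos_of_pos_of_lt_pi hθpos (by linarith)
  have hcross : Real.sin θ * (C + 1) = Real.cos θ * (A * μ) := by
    rw [Real.tan_eq_sin_div_cos] at htan
    have hC1 : (0:ℝ) < C + 1 := by linarith
    field_simp at htan
    linarith [htan]
  have hBt₀ : B t₀ = C + 1 := by
    rw [hB]; simp only []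
    rw [hμt₀]
    field_simp
    linarith [hcross]
  have hBt₁ : B t₁ = -(C + 1) := by
    rw [hB]; simp only []
    rw [hμt₁, Real.cos_pi_sub, Real.sin_pi_sub]
    field_simp
    linarith [hcross]
  -- membership facts
  have hsub : ∀ x ∈ Set.Icc t₀ t₁, ψ x ≠ 0 := by
    intro x hx
    exact ne_of_gt (hpos x ⟨lt_trans ha (lt_of_lt_of_le h_t₀a hx.1), le_trans hx.2 h_t₁b.le⟩)
  have hsubab : Set.Icc t₀ t₁ ⊆ Set.Icc a b := fun x hx =>
    ⟨le_trans h_t₀a.le hx.1, le_trans hx.2 h_t₁b.le⟩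
  -- the fencing theorem
  have key : R t₁ ≤ B t₁ := by
    apply image_le_of_deriv_right_lt_deriv_boundary'
      (f := R) (f' := fun x => -(k * E x) - R x ^ 2 / E x)
      (B := B) (B' := fun x => -(A * μ ^ 2) - B x ^ 2 / A)
      ?_ ?_ ?_ ?_ ?_ ?_ (right_mem_Icc.mpr h_t01.le)
    · intro x hx
      exact ((hRderiv x (hsub x hx)).continuousAt).continuousWithinAt
    · intro x hx
      exact (hRderiv x (hsub x ⟨hx.1, hx.2.le⟩)).hasDerivWithinAt
    · rw [hBt₀]
      have h := hC t₀ (hsubab (left_mem_Icc.mpr h_t01.le))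
      rw [Real.norm_eq_abs] at h
      linarith [le_abs_self (R t₀)]
    · intro x hx
      exact ((hBderiv x (lt_of_lt_of_le h_t₀a hx.1) (lt_of_le_of_lt hx.2 h_t₁b)).continuousAt).continuousWithinAt
    · intro x hx
      exact (hBderiv x (lt_of_lt_of_le h_t₀a hx.1) (lt_trans hx.2 h_t₁b)).hasDerivWithinAt
    · intro x hx heq
      have hE1 := hElow x
      have hE2 := hEup x
      have hEp := hEpos x
      have hdivle : R x ^ 2 / A ≤ R x ^ 2 / E x :=
        div_le_div_of_nonneg_left (sq_nonneg _) hEp hE2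
      have h3 : B x ^ 2 / A = R x ^ 2 / A := by rw [heq]
      have hk2 : k * umin ^ 2 ≤ k * E x := mul_le_mul_of_nonneg_left (hElow x) hk.le
      linarith [hAμ]
  rw [hBt₁] at key
  have h := hC t₁ (hsubab (right_mem_Icc.mpr h_t01.le))
  rw [Real.norm_eq_abs] at h
  have := abs_le.mp h
  linarith [this.1]

/-- **Sturm-type zero estimate for the weighted Jacobi ODE** (core of
Lemma 7.1). If `ψ'' + 2 f' ψ' + k ψ = 0`, `ψ 0 = 0`, `ψ' 0 = 1`, with `k > 0`
and `u_min ≤ e^f ≤ u_max`, then `ψ` has a zero `L` with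
`0 < L ≤ (u_max/u_min) · π/√k`. -/
theorem weighted_jacobi_ode_zero
    (k : ℝ) (hk : 0 < k)
    (f f' : ℝ → ℝ) (hf : ∀ t, HasDerivAt f (f' t) t) (hf' : Continuous f')
    (umin umax : ℝ) (humin : 0 < umin)
    (hu : ∀ t, umin ≤ Real.exp (f t) ∧ Real.exp (f t) ≤ umax)
    (ψ ψ' : ℝ → ℝ)
    (hψ : ∀ t, HasDerivAt ψ (ψ' t) t)
    (hψ'' : ∀ t, HasDerivAt ψ' (-(2 * f' t * ψ' t + k * ψ t)) t)
    (h0 : ψ 0 = 0) (h1 : ψ' 0 = 1) :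
    ∃ L : ℝ, 0 < L ∧ L ≤ umax / umin * (Real.pi / Real.sqrt k) ∧ ψ L = 0 := by
  classical
  set T := umax / umin * (Real.pi / Real.sqrt k) with hT
  have humax : umin ≤ umax := le_trans (hu 0).1 (hu 0).2
  have hsk : 0 < Real.sqrt k := Real.sqrt_pos.mpr hk
  have hTpos : 0 < T := by
    apply mul_pos (div_pos (lt_of_lt_of_le humin humax) humin)
      (div_pos Real.pi_pos hsk)
  have hcψ : Continuous ψ := by
    rw [continuous_iff_continuousAt]; exact fun t => (hψ t).continuousAt
  -- Step A: ψ > 0 on a small right interval (0, d]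
  obtain ⟨d, hd, hdpos⟩ : ∃ d, 0 < d ∧ ∀ t ∈ Set.Ioc (0:ℝ) d, 0 < ψ t := by
    have h := (hasDerivAt_iff_tendsto_slope.mp (hψ 0))
    rw [h1] at h
    have hev : ∀ᶠ t in 𝓝[>] (0:ℝ), slope ψ 0 t > 0 := by
      have : ∀ᶠ t in 𝓝[≠] (0:ℝ), slope ψ 0 t > 0 :=
        h (Ioi_mem_nhds one_pos)
      exact this.filter_mono (nhdsWithin_mono 0 (fun x hx => ne_of_gt hx))
    rw [Filter.eventually_iff, mem_nhdsGT_iff_exists_Ioc_subset] at hev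
    obtain ⟨u, hu0, hsub⟩ := hev
    refine ⟨u, hu0, fun t ht => ?_⟩
    have := hsub ht
    simp only [mem_setOf_eq, slope_def_field, h0, sub_zero] at this
    have htpos : 0 < t := ht.1
    have : 0 < ψ t / t := this
    calc (0:ℝ) = 0 * t := by ring
    _ < (ψ t / t) * t := by apply mul_lt_mul_of_pos_right this htpos
    _ = ψ t := by field_simp
  -- zeros in [d, ∞)
  set Z : Set ℝ := {t | ψ t = 0} ∩ Set.Ici d with hZ
  have hZclosed : IsClosed Z :=
    ((isClosed_singleton (x := (0:ℝ))).preimage hcψ).inter isClosed_Ici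
  have hmem : ∀ b, T < b → ∃ z ∈ Z, z ≤ b := by
    intro b hbT
    obtain ⟨z, hz0, hzb, hzz⟩ := key_zero k hk f f' hf umin umax humin hu ψ ψ'
      hψ hψ'' d hd hdpos b hbT
    refine ⟨z, ⟨hzz, ?_⟩, hzb⟩
    by_contra hlt
    simp only [Set.mem_Ici, not_le] at hlt
    exact absurd hzz (ne_of_gt (hdpos z ⟨hz0, le_of_lt hlt⟩))
  have hZne : Z.Nonempty := by
    obtain ⟨z, hz, _⟩ := hmem (T + 1) (by linarith)
    exact ⟨z, hz⟩
  have hbdd : BddBelow Z := ⟨d, fun z hz => hz.2⟩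
  refine ⟨sInf Z, ?_, ?_, ?_⟩
  · exact lt_of_lt_of_le hd (hZclosed.csInf_mem hZne hbdd).2
  · -- sInf Z ≤ T
    refine le_of_forall_pos_le_add fun δ hδ => ?_
    obtain ⟨z, hz, hzb⟩ := hmem (T + δ) (by linarith)
    exact le_trans (csInf_le hbdd hz) hzb
  · exact (hZclosed.csInf_mem hZne hbdd).1
end

section
/- Weighted second variation identity along a geodesic (Proposition 5.1, formula (5.2), analytic form): Let E be a real inner product space, let α < β be real numbers, let R : [α,β] → (E →L[ℝ] E) be continuous with each R(t) self-adjoint, let a : [α,β] → ℝ be continuously differentiable, and let V : [α,β] → E be continuously differentiable. Then ∫_α^β (‖V'(t)‖² − ⟨R(t)(V(t)), V(t)⟩) dt = ∫_α^β (‖V'(t) − a(t)·V(t)‖² − ⟨R(t)(V(t)), V(t)⟩ − (a'(t) + a(t)²)·‖V(t)‖²) dt + a(β)·‖V(β)‖² − a(α)·‖V(α)‖². -/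
open scoped RealInnerProductSpace

/-- **Weighted second variation identity along a geodesic** (Proposition 5.1,
formula (5.2), analytic form). For a `C¹` variation field `V` along `[α, β]`,
the index form `∫ (‖V'‖² - ⟪R V, V⟫)` equals
`∫ (‖V' - a V‖² - ⟪R V, V⟫ - (a' + a²)‖V‖²) + a(β)‖V(β)‖² - a(α)‖V(α)‖²`. -/
theorem weighted_second_variation_identity
    {E : Type*} [NormedAddCommGroup E] [InnerProductSpace ℝ E]
    (α β : ℝ) (hαβ : α < β)
    (R : ℝ → E →L[ℝ] E) (hRcont : ContinuousOn R (Set.Icc α β))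
    (hRsa : ∀ t ∈ Set.Icc α β, ∀ x y : E, ⟪R t x, y⟫ = ⟪x, R t y⟫)
    (a a' : ℝ → ℝ)
    (ha : ∀ t ∈ Set.Icc α β, HasDerivWithinAt a (a' t) (Set.Icc α β) t)
    (ha' : ContinuousOn a' (Set.Icc α β))
    (V V' : ℝ → E)
    (hV : ∀ t ∈ Set.Icc α β, HasDerivWithinAt V (V' t) (Set.Icc α β) t)
    (hV' : ContinuousOn V' (Set.Icc α β)) :
    ∫ t in α..β, (‖V' t‖ ^ 2 - ⟪R t (V t), V t⟫) =
      (∫ t in α..β, (‖V' t - a t • V t‖ ^ 2 - ⟪R t (V t), V t⟫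
          - (a' t + (a t) ^ 2) * ‖V t‖ ^ 2))
        + a β * ‖V β‖ ^ 2 - a α * ‖V α‖ ^ 2 := by
  have hIcc : Set.uIcc α β = Set.Icc α β := Set.uIcc_of_le hαβ.le
  have hVc : ContinuousOn V (Set.Icc α β) := fun t ht => (hV t ht).continuousWithinAt
  have hac : ContinuousOn a (Set.Icc α β) := fun t ht => (ha t ht).continuousWithinAt
  -- the correction term
  set g : ℝ → ℝ := fun t => a' t * ‖V t‖ ^ 2 + 2 * a t * ⟪V' t, V t⟫ with hg
  have hRVV : ContinuousOn (fun t => ⟪R t (V t), V t⟫) (Set.Icc α β) :=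
    (hRcont.clm_apply hVc).inner hVc
  have hgc : ContinuousOn g (Set.Icc α β) := by
    apply ContinuousOn.add
    · exact ha'.mul ((hVc.norm).pow 2)
    · exact (continuousOn_const.mul hac).mul (hV'.inner hVc)
  have hLc : ContinuousOn (fun t => ‖V' t‖ ^ 2 - ⟪R t (V t), V t⟫) (Set.Icc α β) :=
    ((hV'.norm.pow 2).sub hRVV)
  have hLi : IntervalIntegrable (fun t => ‖V' t‖ ^ 2 - ⟪R t (V t), V t⟫)
      MeasureTheory.volume α β := by
    apply ContinuousOn.intervalIntegrable; rwa [hIcc]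
  have hgi : IntervalIntegrable g MeasureTheory.volume α β := by
    apply ContinuousOn.intervalIntegrable; rwa [hIcc]
  -- pointwise identity
  have key : ∀ t, ‖V' t - a t • V t‖ ^ 2 - ⟪R t (V t), V t⟫
      - (a' t + (a t) ^ 2) * ‖V t‖ ^ 2
      = (‖V' t‖ ^ 2 - ⟪R t (V t), V t⟫) - g t := by
    intro t
    have h1 : ‖V' t - a t • V t‖ ^ 2
        = ‖V' t‖ ^ 2 - 2 * ⟪V' t, a t • V t⟫ + ‖a t • V t‖ ^ 2 :=
      norm_sub_sq_real _ _
    rw [h1, real_inner_smul_right, norm_smul]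
    simp [hg, abs_mul_abs_self, mul_pow, sq_abs]
    ring
  -- FTC for a t * ‖V t‖²
  have hftc : ∫ t in α..β, g t = a β * ‖V β‖ ^ 2 - a α * ‖V α‖ ^ 2 := by
    apply intervalIntegral.integral_eq_sub_of_hasDeriv_right_of_le hαβ.le
    · exact hac.mul (hVc.norm.pow 2)
    · intro x hx
      have hxI : Set.Icc α β ∈ nhds x := Icc_mem_nhds hx.1 hx.2
      have hxm : x ∈ Set.Icc α β := ⟨hx.1.le, hx.2.le⟩
      have hVd : HasDerivAt V (V' x) x := (hV x hxm).hasDerivAt hxI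
      have had : HasDerivAt a (a' x) x := (ha x hxm).hasDerivAt hxI
      have hN : HasDerivAt (fun t => ‖V t‖ ^ 2) (2 * ⟪V' x, V x⟫) x := by
        have := (hVd.inner ℝ hVd : HasDerivAt (fun t => ⟪V t, V t⟫)
          (⟪V x, V' x⟫ + ⟪V' x, V x⟫) x)
        simp only [real_inner_self_eq_norm_sq] at this
        refine this.congr_deriv ?_
        rw [real_inner_comm (V x) (V' x)]; ring
      have := had.mul hN
      refine this.hasDerivWithinAt.congr_deriv ?_
      simp [hg]; ring
    · exact hgi
  calc ∫ t in α..β, (‖V' t‖ ^ 2 - ⟪R t (V t), V t⟫)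
      = (∫ t in α..β, ((‖V' t‖ ^ 2 - ⟪R t (V t), V t⟫) - g t)) + ∫ t in α..β, g t := by
        rw [intervalIntegral.integral_sub hLi hgi]; ring
    _ = (∫ t in α..β, (‖V' t - a t • V t‖ ^ 2 - ⟪R t (V t), V t⟫
          - (a' t + (a t) ^ 2) * ‖V t‖ ^ 2))
        + a β * ‖V β‖ ^ 2 - a α * ‖V α‖ ^ 2 := by
        rw [hftc]
        simp only [key]
        ring
end
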